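/- arXiv:1905.10256 — 7 statements merged into one kernel-verified Lean document; each statement's English description precedes it below -/
import Mathlib

section
/- Let T be a triangulated category and F : A → T an additive functor from an additive category A. The cone functor Cone : (T ↓ F) → (F ↓ T)/RT, sending an object (Y, A; g) to (A, X; f) where Y →g F(A) →f X → ΣY is an exact triangle, and a morphism (c, a) to the induced morphism (a, b) obtained from axiom (TR3), is a well-defined functor; that is, the class of b modulo right-trivial morphisms does not depend on the choice of b. -/
open CategoryTheory Category Limits Pretriangulated

variable {A : Type*} [Category A] [Preadditive A]
variable {T : Type*} [Category T] [HasZeroObject T] [Preadditive T] [HasShift T ℤ]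
  [∀ n : ℤ, (shiftFunctor T n).Additive] [Pretriangulated T]

/-- The cone functor `(T ↓ F) → (F ↓ T)/RT` is well defined: given exact triangles
`Y → F A₀ → X → ΣY` and `Y' → F A₁ → X' → ΣY'` and a morphism `(c, a) : (Y, A₀; g) → (Y', A₁; g')`,
a filler `b : X → X'` of the (TR3) diagram exists, and any two such fillers differ by a
morphism factoring through `f'`, i.e. by a right trivial morphism. -/
theorem cone_functor_well_defined (F : A ⥤ T) [F.Additive]
    {Y Y' X X' : T} {A₀ A₁ : A}
    (g : Y ⟶ F.obj A₀) (f : F.obj A₀ ⟶ X) (h : X ⟶ Y⟦(1 : ℤ)⟧)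
    (g' : Y' ⟶ F.obj A₁) (f' : F.obj A₁ ⟶ X') (h' : X' ⟶ Y'⟦(1 : ℤ)⟧)
    (ht : Triangle.mk g f h ∈ distTriang T)
    (ht' : Triangle.mk g' f' h' ∈ distTriang T)
    (c : Y ⟶ Y') (a : A₀ ⟶ A₁) (hc : g ≫ F.map a = c ≫ g') :
    (∃ b : X ⟶ X', F.map a ≫ f' = f ≫ b ∧ b ≫ h' = h ≫ c⟦(1 : ℤ)⟧') ∧
    (∀ b b' : X ⟶ X',
      (F.map a ≫ f' = f ≫ b ∧ b ≫ h' = h ≫ c⟦(1 : ℤ)⟧') →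
      (F.map a ≫ f' = f ≫ b' ∧ b' ≫ h' = h ≫ c⟦(1 : ℤ)⟧') →
      ∃ k : X ⟶ F.obj A₁, b - b' = k ≫ f') := by
  constructor
  · obtain ⟨b, hb₁, hb₂⟩ := complete_distinguished_triangle_morphism _ _ ht ht' c (F.map a) hc
    exact ⟨b, hb₁.symm, hb₂.symm⟩
  · rintro b b' ⟨hb₁, hb₂⟩ ⟨hb₁', hb₂'⟩
    obtain ⟨k, hk⟩ := Triangle.coyoneda_exact₃ _ ht' (b - b')
      (by show (b - b') ≫ h' = 0; rw [Preadditive.sub_comp, hb₂, hb₂', sub_self])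
    exact ⟨k, hk⟩
end

section
/- Let T be a triangulated category and F : A → T an additive functor. The induced cone functor Cone : (T ↓ F)/LT → (F ↓ T)/RT is an equivalence of categories. In particular, in a commutative diagram coming from (TR3) relating triangles Y → F(A) → X → ΣY and Y' → F(A') → X' → ΣY', the morphism (c,a) is left trivial if and only if the induced morphism (a,b) is right trivial. -/
open CategoryTheory Category Limits Pretriangulated

variable {A : Type*} [Category A] [Preadditive A]
variable {T : Type*} [Category T] [HasZeroObject T] [Preadditive T] [HasShift T ℤ]
  [∀ n : ℤ, (shiftFunctor T n).Additive] [Pretriangulated T]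

/-- The induced cone functor `Cone : (T ↓ F)/LT → (F ↓ T)/RT` is an equivalence: it is
dense (every object `(A₀, X; f)` of `(F ↓ T)` is a cone), full (every morphism of
`(F ↓ T)` agrees modulo right trivial morphisms with one induced by a morphism of
`(T ↓ F)`), and faithful: in a (TR3) diagram relating two exact triangles, the morphism
`(c, a)` is left trivial iff the induced morphism `(a, b)` is right trivial. -/
theorem cone_functor_equivalence (F : A ⥤ T) [F.Additive] :
    (∀ (A₀ : A) (X : T) (f : F.obj A₀ ⟶ X),
      ∃ (Y : T) (g : Y ⟶ F.obj A₀) (h : X ⟶ Y⟦(1 : ℤ)⟧),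
        Triangle.mk g f h ∈ distTriang T) ∧
    (∀ {Y Y' X X' : T} {A₀ A₁ : A}
      (g : Y ⟶ F.obj A₀) (f : F.obj A₀ ⟶ X) (h : X ⟶ Y⟦(1 : ℤ)⟧)
      (g' : Y' ⟶ F.obj A₁) (f' : F.obj A₁ ⟶ X') (h' : X' ⟶ Y'⟦(1 : ℤ)⟧),
      (Triangle.mk g f h ∈ distTriang T) →
      (Triangle.mk g' f' h' ∈ distTriang T) →
      ∀ (a : A₀ ⟶ A₁) (b : X ⟶ X'), F.map a ≫ f' = f ≫ b →
        ∃ (c : Y ⟶ Y') (b₂ : X ⟶ X') (k : X ⟶ F.obj A₁),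
          g ≫ F.map a = c ≫ g' ∧ F.map a ≫ f' = f ≫ b₂ ∧
          b₂ ≫ h' = h ≫ c⟦(1 : ℤ)⟧' ∧ b - b₂ = k ≫ f') ∧
    (∀ {Y Y' X X' : T} {A₀ A₁ : A}
      (g : Y ⟶ F.obj A₀) (f : F.obj A₀ ⟶ X) (h : X ⟶ Y⟦(1 : ℤ)⟧)
      (g' : Y' ⟶ F.obj A₁) (f' : F.obj A₁ ⟶ X') (h' : X' ⟶ Y'⟦(1 : ℤ)⟧),
      (Triangle.mk g f h ∈ distTriang T) →
      (Triangle.mk g' f' h' ∈ distTriang T) →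
      ∀ (c : Y ⟶ Y') (a : A₀ ⟶ A₁) (b : X ⟶ X'),
        g ≫ F.map a = c ≫ g' → F.map a ≫ f' = f ≫ b → b ≫ h' = h ≫ c⟦(1 : ℤ)⟧' →
        ((a = 0 ∧ ∃ s : F.obj A₀ ⟶ Y', c = g ≫ s) ↔
         (a = 0 ∧ ∃ t : X ⟶ F.obj A₁, b = t ≫ f'))) := by
  refine ⟨?_, ?_, ?_⟩
  · -- density
    intro A₀ X f
    obtain ⟨Z, f', h, mem⟩ := distinguished_cocone_triangle f
    exact ⟨_, _, _, inv_rot_of_distTriang _ mem⟩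
  · -- fullness
    intro Y Y' X X' A₀ A₁ g f h g' f' h' hT hT' a b hab
    have hf'h' : f' ≫ h' = 0 := comp_distTriang_mor_zero₂₃ _ hT'
    -- b ≫ h' factors through h
    obtain ⟨m, hm⟩ : ∃ m : Y⟦(1 : ℤ)⟧ ⟶ Y'⟦(1 : ℤ)⟧, b ≫ h' = h ≫ m :=
      Triangle.yoneda_exact₃ _ hT (b ≫ h') (by
        change f ≫ b ≫ h' = 0
        rw [← assoc, ← hab, assoc, hf'h', comp_zero])
    set c₀ : Y ⟶ Y' := (shiftFunctor T (1 : ℤ)).preimage m with hc₀def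
    have hc₀ : c₀⟦(1 : ℤ)⟧' = m := (shiftFunctor T (1 : ℤ)).map_preimage m
    -- complete (b, m) to a morphism of twice-rotated triangles
    obtain ⟨e, he₁, he₂⟩ : ∃ e : (F.obj A₀)⟦(1 : ℤ)⟧ ⟶ (F.obj A₁)⟦(1 : ℤ)⟧,
        (-g⟦(1 : ℤ)⟧') ≫ e = m ≫ (-g'⟦(1 : ℤ)⟧') ∧
        (-f⟦(1 : ℤ)⟧') ≫ b⟦(1 : ℤ)⟧' = e ≫ (-f'⟦(1 : ℤ)⟧') :=
      complete_distinguished_triangle_morphism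
      ((Triangle.mk g f h).rotate.rotate) ((Triangle.mk g' f' h').rotate.rotate)
      (rot_of_distTriang _ (rot_of_distTriang _ hT))
      (rot_of_distTriang _ (rot_of_distTriang _ hT')) b m hm.symm
    simp only [Preadditive.neg_comp, Preadditive.comp_neg, neg_inj] at he₁ he₂
    set a₂ : F.obj A₀ ⟶ F.obj A₁ := (shiftFunctor T (1 : ℤ)).preimage e with ha₂def
    have ha₂ : a₂⟦(1 : ℤ)⟧' = e := (shiftFunctor T (1 : ℤ)).map_preimage e
    have ha₂f' : a₂ ≫ f' = f ≫ b := by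
      apply (shiftFunctor T (1 : ℤ)).map_injective
      rw [Functor.map_comp, Functor.map_comp, ha₂, he₂]
    have hga₂ : g ≫ a₂ = c₀ ≫ g' := by
      apply (shiftFunctor T (1 : ℤ)).map_injective
      rw [Functor.map_comp, Functor.map_comp, ha₂, hc₀, he₁]
    -- F.map a - a₂ factors through g'
    obtain ⟨u, hu⟩ : ∃ u : F.obj A₀ ⟶ Y', F.map a - a₂ = u ≫ g' :=
      Triangle.coyoneda_exact₂ _ hT' (F.map a - a₂) (by
        change (F.map a - a₂) ≫ f' = 0
        rw [Preadditive.sub_comp, hab, ha₂f', sub_self])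
    set c : Y ⟶ Y' := c₀ + g ≫ u with hcdef
    have hcomm : g ≫ F.map a = c ≫ g' := by
      have : F.map a = a₂ + u ≫ g' := by rw [← hu]; abel
      rw [this, hcdef, Preadditive.comp_add, Preadditive.add_comp, hga₂, assoc]
    obtain ⟨b₂, hb₁, hb₂⟩ : ∃ b₂ : X ⟶ X',
        f ≫ b₂ = F.map a ≫ f' ∧ h ≫ c⟦(1 : ℤ)⟧' = b₂ ≫ h' :=
      complete_distinguished_triangle_morphism
        (Triangle.mk g f h) (Triangle.mk g' f' h') hT hT' c (F.map a) hcomm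
    -- b - b₂ kills h'
    have hbb : (b - b₂) ≫ h' = 0 := by
      have h31 : h ≫ g⟦(1 : ℤ)⟧' = 0 := comp_distTriang_mor_zero₃₁ _ hT
      rw [Preadditive.sub_comp, hm, ← hb₂, ← hc₀, hcdef, Functor.map_add,
        Preadditive.comp_add, Functor.map_comp, ← assoc, h31, zero_comp, add_zero, sub_self]
    obtain ⟨k, hk⟩ : ∃ k : X ⟶ F.obj A₁, b - b₂ = k ≫ f' :=
      Triangle.coyoneda_exact₃ _ hT' (b - b₂) (by exact hbb)
    exact ⟨c, b₂, k, hcomm, hb₁.symm, hb₂.symm, hk⟩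
  · -- faithfulness
    intro Y Y' X X' A₀ A₁ g f h g' f' h' hT hT' c a b hc hb hh
    constructor
    · rintro ⟨ha, s, hs⟩
      refine ⟨ha, ?_⟩
      have h31 : h ≫ g⟦(1 : ℤ)⟧' = 0 := comp_distTriang_mor_zero₃₁ _ hT
      have hbh' : b ≫ h' = 0 := by
        rw [hh, hs, Functor.map_comp, ← assoc, h31, zero_comp]
      obtain ⟨t, ht⟩ : ∃ t : X ⟶ F.obj A₁, b = t ≫ f' :=
        Triangle.coyoneda_exact₃ _ hT' b (by exact hbh')
      exact ⟨t, ht⟩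
    · rintro ⟨ha, t, ht⟩
      refine ⟨ha, ?_⟩
      have h23 : f' ≫ h' = 0 := comp_distTriang_mor_zero₂₃ _ hT'
      have hhc : h ≫ c⟦(1 : ℤ)⟧' = 0 := by
        rw [← hh, ht, assoc, h23, comp_zero]
      obtain ⟨ψ, hψ⟩ : ∃ ψ : (F.obj A₀)⟦(1 : ℤ)⟧ ⟶ Y'⟦(1 : ℤ)⟧,
          c⟦(1 : ℤ)⟧' = (-g⟦(1 : ℤ)⟧') ≫ ψ := Triangle.yoneda_exact₂ _
        (rot_of_distTriang _ (rot_of_distTriang _ hT)) (c⟦(1 : ℤ)⟧')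
        (by exact hhc)
      refine ⟨(shiftFunctor T (1 : ℤ)).preimage (-ψ), ?_⟩
      apply (shiftFunctor T (1 : ℤ)).map_injective
      rw [Functor.map_comp, (shiftFunctor T (1 : ℤ)).map_preimage, hψ]
      simp
end

section
/- (Theorem A, fullness) Given a recollement (T', T, T''), the functor Φ : T → (i_ρ j_λ ↓ T') sending X to (j X, i_ρ X; i_ρ φ_X) and f to (j f, i_ρ f) is full: any morphism (a, b) : Φ(X) → Φ(Y) in the comma category lifts to a morphism f : X → Y with j f = a and i_ρ f = b. -/
open CategoryTheory Category Limits Pretriangulated Preadditive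

/-- A recollement of triangulated categories, following [BBD 1.4]. -/
structure Recollement (T₁ T₂ T₃ : Type*)
    [Category T₁] [Category T₂] [Category T₃]
    [HasZeroObject T₁] [HasZeroObject T₂] [HasZeroObject T₃]
    [Preadditive T₁] [Preadditive T₂] [Preadditive T₃]
    [HasShift T₁ ℤ] [HasShift T₂ ℤ] [HasShift T₃ ℤ]
    [∀ n : ℤ, (shiftFunctor T₁ n).Additive]
    [∀ n : ℤ, (shiftFunctor T₂ n).Additive]
    [∀ n : ℤ, (shiftFunctor T₃ n).Additive]
    [Pretriangulated T₁] [Pretriangulated T₂] [Pretriangulated T₃] where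
  i : T₁ ⥤ T₂
  iL : T₂ ⥤ T₁
  iR : T₂ ⥤ T₁
  j : T₂ ⥤ T₃
  jL : T₃ ⥤ T₂
  jR : T₃ ⥤ T₂
  i_commShift : i.CommShift ℤ
  iL_commShift : iL.CommShift ℤ
  iR_commShift : iR.CommShift ℤ
  j_commShift : j.CommShift ℤ
  jL_commShift : jL.CommShift ℤ
  jR_commShift : jR.CommShift ℤ
  i_isTriangulated : letI := i_commShift; i.IsTriangulated
  iL_isTriangulated : letI := iL_commShift; iL.IsTriangulated
  iR_isTriangulated : letI := iR_commShift; iR.IsTriangulated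
  j_isTriangulated : letI := j_commShift; j.IsTriangulated
  jL_isTriangulated : letI := jL_commShift; jL.IsTriangulated
  jR_isTriangulated : letI := jR_commShift; jR.IsTriangulated
  adj_iL : iL ⊣ i
  adj_iR : i ⊣ iR
  adj_jL : jL ⊣ j
  adj_jR : j ⊣ jR
  i_faithful : i.Faithful
  i_full : i.Full
  jL_faithful : jL.Faithful
  jL_full : jL.Full
  jR_faithful : jR.Faithful
  jR_full : jR.Full
  /-- the unit `ε' : Id → i_ρ i` is invertible (i.e. `i` is fully faithful) -/
  isIso_iR_unit : ∀ X : T₁, IsIso (adj_iR.unit.app X)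
  /-- the counit `ψ' : i_λ i → Id` is invertible -/
  isIso_iL_counit : ∀ X : T₁, IsIso (adj_iL.counit.app X)
  /-- the unit `φ' : Id → j j_λ` is invertible (i.e. `j_λ` is fully faithful) -/
  isIso_jL_unit : ∀ Y : T₃, IsIso (adj_jL.unit.app Y)
  /-- the counit `η' : j j_ρ → Id` is invertible (i.e. `j_ρ` is fully faithful) -/
  isIso_jR_counit : ∀ Y : T₃, IsIso (adj_jR.counit.app Y)
  ji_zero : ∀ X : T₁, IsZero (j.obj (i.obj X))
  /-- the connecting morphism `δ : j_ρ j → Σ i i_ρ` -/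
  δ : ∀ X : T₂, jR.obj (j.obj X) ⟶ (i.obj (iR.obj X))⟦(1 : ℤ)⟧
  δ_natural : ∀ {X Y : T₂} (f : X ⟶ Y),
    jR.map (j.map f) ≫ δ Y = δ X ≫ (i.map (iR.map f))⟦(1 : ℤ)⟧'
  /-- the functorial exact triangle `i i_ρ X → X → j_ρ j X → Σ i i_ρ X` -/
  tri₁ : ∀ X : T₂,
    Triangle.mk (adj_iR.counit.app X) (adj_jR.unit.app X) (δ X) ∈ distTriang T₂
  /-- the connecting morphism `σ : i i_λ → Σ j_λ j` -/
  σ : ∀ X : T₂, i.obj (iL.obj X) ⟶ (jL.obj (j.obj X))⟦(1 : ℤ)⟧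
  σ_natural : ∀ {X Y : T₂} (f : X ⟶ Y),
    i.map (iL.map f) ≫ σ Y = σ X ≫ (jL.map (j.map f))⟦(1 : ℤ)⟧'
  /-- the functorial exact triangle `j_λ j X → X → i i_λ X → Σ j_λ j X` -/
  tri₂ : ∀ X : T₂,
    Triangle.mk (adj_jL.counit.app X) (adj_iL.unit.app X) (σ X) ∈ distTriang T₂

variable {T₁ T₂ T₃ : Type*}
  [Category T₁] [Category T₂] [Category T₃]
  [HasZeroObject T₁] [HasZeroObject T₂] [HasZeroObject T₃]
  [Preadditive T₁] [Preadditive T₂] [Preadditive T₃]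
  [HasShift T₁ ℤ] [HasShift T₂ ℤ] [HasShift T₃ ℤ]
  [∀ n : ℤ, (shiftFunctor T₁ n).Additive]
  [∀ n : ℤ, (shiftFunctor T₂ n).Additive]
  [∀ n : ℤ, (shiftFunctor T₃ n).Additive]
  [Pretriangulated T₁] [Pretriangulated T₂] [Pretriangulated T₃]

/-- Theorem A, fullness: the functor `Φ : T → (i_ρ j_λ ↓ T')`, `X ↦ (j X, i_ρ X; i_ρ φ_X)`,
is full. -/
theorem comparison_functor_full (R : Recollement T₁ T₂ T₃) :
    ∀ (X Y : T₂) (a : R.j.obj X ⟶ R.j.obj Y) (b : R.iR.obj X ⟶ R.iR.obj Y),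
      R.iR.map (R.jL.map a) ≫ R.iR.map (R.adj_jL.counit.app Y) =
        R.iR.map (R.adj_jL.counit.app X) ≫ b →
      ∃ f : X ⟶ Y, R.j.map f = a ∧ R.iR.map f = b := by
  intro X Y a b hab
  letI := R.i_commShift
  letI := R.iR_commShift
  letI := R.j_commShift
  haveI := R.iR_isTriangulated
  haveI := R.j_isTriangulated
  -- zero detection: a map from a (-1)-shift of an `i`-object is zero iff its `iR`-image is
  have hzero : ∀ (A : T₁) (g : (R.i.obj A)⟦(-1 : ℤ)⟧ ⟶ Y), R.iR.map g = 0 → g = 0 := by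
    intro A g hg
    have h1 : (R.i_commShift.commShiftIso (-1 : ℤ)).hom.app A ≫ g = 0 := by
      apply (R.adj_iR.homEquiv _ _).injective
      simp [Adjunction.homEquiv_apply, hg]
    rw [← cancel_epi ((R.i_commShift.commShiftIso (-1 : ℤ)).hom.app A), h1, comp_zero]
  set u : R.jL.obj (R.j.obj X) ⟶ Y := R.jL.map a ≫ R.adj_jL.counit.app Y with hu
  have hiRu : R.iR.map u = R.iR.map (R.adj_jL.counit.app X) ≫ b := by
    rw [hu, R.iR.map_comp, hab]
  set T : Triangle T₂ :=
    Triangle.mk (R.adj_jL.counit.app X) (R.adj_iL.unit.app X) (R.σ X) with hTdef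
  have hT : T ∈ distTriang T₂ := R.tri₂ X
  have hT' := inv_rot_of_distTriang T hT
  have hobs : T.invRotate.mor₁ ≫ u = 0 := by
    apply hzero (R.iL.obj X)
    erw [R.iR.map_comp, hiRu, ← assoc, ← R.iR.map_comp]
    have h0 : T.invRotate.mor₁ ≫ R.adj_jL.counit.app X = 0 :=
      comp_distTriang_mor_zero₁₂ _ hT'
    erw [h0, R.iR.map_zero, zero_comp]
  obtain ⟨f₀, hf₀⟩ := Triangle.yoneda_exact₂ T.invRotate hT' u hobs
  let f₁ : X ⟶ Y := f₀
  have hf₀' : u = R.adj_jL.counit.app X ≫ f₁ := hf₀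
  have hja : R.j.map f₁ = a := by
    have := congrArg (fun t => R.adj_jL.unit.app (R.j.obj X) ≫ R.j.map t) hf₀'
    simpa [hu, Adjunction.unit_naturality_assoc] using this.symm
  have hb' : R.iR.map (R.adj_jL.counit.app X) ≫ R.iR.map f₁ =
      R.iR.map (R.adj_jL.counit.app X) ≫ b := by
    rw [← R.iR.map_comp, ← hf₀', hiRu]
  set e : R.iR.obj X ⟶ R.iR.obj Y := b - R.iR.map f₁ with he
  have he0 : R.iR.map (R.adj_jL.counit.app X) ≫ e = 0 := by
    rw [he, comp_sub, hb', sub_self]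
  have hT2 : R.iR.mapTriangle.obj T ∈ distTriang T₁ := R.iR.map_distinguished T hT
  obtain ⟨s, hs⟩ := Triangle.yoneda_exact₂ _ hT2 e he0
  have hs' : e = R.iR.map (R.adj_iL.unit.app X) ≫ s := hs
  set t : R.i.obj (R.iL.obj X) ⟶ Y :=
    R.i.map (R.adj_iR.unit.app (R.iL.obj X) ≫ s) ≫ R.adj_iR.counit.app Y with ht
  have hiRt : R.iR.map t = s := by
    haveI := R.isIso_iR_unit (R.iL.obj X)
    refine (cancel_epi (R.adj_iR.unit.app (R.iL.obj X))).mp ?_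
    erw [ht, R.iR.map_comp, ← assoc, Adjunction.unit_naturality]
    simp
  let h : X ⟶ Y := R.adj_iL.unit.app X ≫ t
  have hh : h = R.adj_iL.unit.app X ≫ t := rfl
  refine ⟨f₁ + h, ?_, ?_⟩
  · rw [R.j.map_add, hja, hh, R.j.map_comp]
    have h0 : R.j.map t = 0 := (R.ji_zero (R.iL.obj X)).eq_of_src _ _
    rw [h0, comp_zero, add_zero]
  · rw [R.iR.map_add, hh, R.iR.map_comp, hiRt, ← hs', he]
    abel
end

section
/- (Theorem A, denseness) Given a recollement (T', T, T''), the functor Φ : T → (i_ρ j_λ ↓ T') defined by Φ(X) = (j X, i_ρ X; i_ρ φ_X) is dense: every object (A, Z; f) of the comma category, with f : i_ρ j_λ A → Z in T', is isomorphic to Φ(C) where C is a cone of the morphism (i f, −ε_{j_λ A})ᵗ : i i_ρ j_λ A → i Z ⊕ j_λ A. -/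
open CategoryTheory Category Limits Pretriangulated Preadditive

variable {T₁ T₂ T₃ : Type*}
  [Category T₁] [Category T₂] [Category T₃]
  [HasZeroObject T₁] [HasZeroObject T₂] [HasZeroObject T₃]
  [Preadditive T₁] [Preadditive T₂] [Preadditive T₃]
  [HasShift T₁ ℤ] [HasShift T₂ ℤ] [HasShift T₃ ℤ]
  [∀ n : ℤ, (shiftFunctor T₁ n).Additive]
  [∀ n : ℤ, (shiftFunctor T₂ n).Additive]
  [∀ n : ℤ, (shiftFunctor T₃ n).Additive]
  [Pretriangulated T₁] [Pretriangulated T₂] [Pretriangulated T₃]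

/-- Theorem A, denseness: every object `(A, Z; f)` of the comma category `(i_ρ j_λ ↓ T')`
is isomorphic to `Φ(C)`, where `C` is a cone of `(i f, −ε_{j_λ A})ᵗ : i i_ρ j_λ A → i Z ⊕ j_λ A`. -/
theorem comparison_functor_dense (R : Recollement T₁ T₂ T₃) [HasBinaryBiproducts T₂] :
    ∀ (A : T₃) (Z : T₁) (f : R.iR.obj (R.jL.obj A) ⟶ Z) (C : T₂)
      (x : R.i.obj Z ⟶ C) (y : R.jL.obj A ⟶ C)
      (w : C ⟶ (R.i.obj (R.iR.obj (R.jL.obj A)))⟦(1 : ℤ)⟧),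
      (Triangle.mk (biprod.lift (R.i.map f) (-(R.adj_iR.counit.app (R.jL.obj A))))
          (biprod.desc x y) w ∈ distTriang T₂) →
      ∃ (a : A ≅ R.j.obj C) (b : Z ≅ R.iR.obj C),
        R.iR.map (R.jL.map a.hom) ≫ R.iR.map (R.adj_jL.counit.app C) = f ≫ b.hom := by
  intro A Z f C x y w hT
  letI := R.iR_commShift
  letI := R.j_commShift
  haveI := R.iR_isTriangulated
  haveI := R.j_isTriangulated
  set T : Triangle T₂ := Triangle.mk
    (biprod.lift (R.i.map f) (-(R.adj_iR.counit.app (R.jL.obj A)))) (biprod.desc x y) w with hTdef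
  -- basic consequences of the triangle being distinguished
  have hcomp : R.i.map f ≫ x = R.adj_iR.counit.app (R.jL.obj A) ≫ y := by
    have h0 := comp_distTriang_mor_zero₁₂ _ hT
    dsimp only [T, Triangle.mk] at h0
    rw [biprod.lift_desc, neg_comp, ← sub_eq_add_neg] at h0
    exact sub_eq_zero.mp h0
  have key : f ≫ R.adj_iR.unit.app Z ≫ R.iR.map x = R.iR.map y := by
    have h1 := R.adj_iR.unit.naturality f
    dsimp at h1
    rw [← assoc, h1, assoc, ← R.iR.map_comp, hcomp, R.iR.map_comp,
      ← assoc, R.adj_iR.right_triangle_components, id_comp]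
  have hxw : x ≫ w = 0 := by
    have h0 := comp_distTriang_mor_zero₂₃ _ hT
    dsimp only [T, Triangle.mk] at h0
    calc x ≫ w = biprod.inl ≫ biprod.desc x y ≫ w := by rw [biprod.inl_desc_assoc]
    _ = 0 := by erw [h0, comp_zero]
  -- the `j` part : `j.map y` is an isomorphism
  have hjT := R.j.map_distinguished _ hT
  have hdesc_iso : IsIso (R.j.map (biprod.desc x y)) :=
    (Triangle.isZero₁_iff_isIso₂ _ hjT).1 (R.ji_zero _)
  have hinr_iso : IsIso (R.j.map (biprod.inr : R.jL.obj A ⟶ R.i.obj Z ⊞ R.jL.obj A)) := by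
    refine ⟨⟨R.j.map biprod.snd, ?_, ?_⟩⟩
    · rw [← R.j.map_comp, biprod.inr_snd, R.j.map_id]
    · have h0 : (R.j.map (biprod.inl : R.i.obj Z ⟶ R.i.obj Z ⊞ R.jL.obj A)) = 0 :=
        (R.ji_zero Z).eq_of_src _ _
      rw [← R.j.map_comp, ← R.j.map_id]
      conv_rhs => rw [← biprod.total]
      rw [R.j.map_add, R.j.map_comp, R.j.map_comp, h0, comp_zero, zero_add]
  have hy_iso : IsIso (R.j.map y) := by
    rw [show y = biprod.inr ≫ biprod.desc x y from (biprod.inr_desc x y).symm, R.j.map_comp]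
    infer_instance
  -- the `iR` part : `η_Z ≫ iR x` is an isomorphism
  have hiT := R.iR.map_distinguished _ hT
  have hbi := binaryBiproductTriangle_distinguished (R.iR.obj (R.jL.obj A)) Z
  haveI := R.isIso_iR_unit (R.iR.obj (R.jL.obj A))
  haveI := R.isIso_iR_unit Z
  set η := R.adj_iR.unit with hη
  set e₁ : R.iR.obj (R.i.obj Z) ⟶ R.iR.obj (R.i.obj Z ⊞ R.jL.obj A) :=
    R.iR.map biprod.inl with he₁
  set e₂ : R.iR.obj (R.jL.obj A) ⟶ R.iR.obj (R.i.obj Z ⊞ R.jL.obj A) :=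
    R.iR.map biprod.inr with he₂
  set p : R.iR.obj (R.i.obj Z ⊞ R.jL.obj A) ⟶ R.iR.obj (R.i.obj Z) :=
    R.iR.map biprod.fst with hp
  set q : R.iR.obj (R.i.obj Z ⊞ R.jL.obj A) ⟶ R.iR.obj (R.jL.obj A) :=
    R.iR.map biprod.snd with hq
  have he₁p0 : e₁ ≫ p = 𝟙 _ := by
    rw [he₁, hp, ← R.iR.map_comp, biprod.inl_fst, R.iR.map_id]
  have he₁q0 : e₁ ≫ q = 0 := by
    rw [he₁, hq, ← R.iR.map_comp, biprod.inl_snd, R.iR.map_zero]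
  have he₂p0 : e₂ ≫ p = 0 := by
    rw [he₂, hp, ← R.iR.map_comp, biprod.inr_fst, R.iR.map_zero]
  have he₂q0 : e₂ ≫ q = 𝟙 _ := by
    rw [he₂, hq, ← R.iR.map_comp, biprod.inr_snd, R.iR.map_id]
  have he₁p : ∀ {W : T₁} (g : R.iR.obj (R.i.obj Z) ⟶ W), e₁ ≫ p ≫ g = g := by
    intro W g; rw [← assoc, he₁p0, id_comp]
  have he₁q : ∀ {W : T₁} (g : R.iR.obj (R.jL.obj A) ⟶ W), e₁ ≫ q ≫ g = 0 := by
    intro W g; rw [← assoc, he₁q0, zero_comp]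
  have he₂p : ∀ {W : T₁} (g : R.iR.obj (R.i.obj Z) ⟶ W), e₂ ≫ p ≫ g = 0 := by
    intro W g; rw [← assoc, he₂p0, zero_comp]
  have he₂q : ∀ {W : T₁} (g : R.iR.obj (R.jL.obj A) ⟶ W), e₂ ≫ q ≫ g = g := by
    intro W g; rw [← assoc, he₂q0, id_comp]
  have htot : p ≫ e₁ + q ≫ e₂ = 𝟙 _ := by
    rw [hp, hq, he₁, he₂, ← R.iR.map_comp, ← R.iR.map_comp, ← R.iR.map_add, biprod.total,
      R.iR.map_id]
  set φ : binaryBiproductTriangle (R.iR.obj (R.jL.obj A)) Z ⟶ R.iR.mapTriangle.obj T :=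
    { hom₁ := η.app (R.iR.obj (R.jL.obj A))
      hom₂ := biprod.desc (f ≫ η.app Z ≫ e₁ - e₂) (η.app Z ≫ e₁)
      hom₃ := η.app Z ≫ R.iR.map x
      comm₁ := by
        dsimp only [T, Functor.mapTriangle, binaryBiproductTriangle, Triangle.mk]
        rw [biprod.inl_desc, biprod.lift_eq, neg_comp, ← sub_eq_add_neg, R.iR.map_sub,
          R.iR.map_comp, R.iR.map_comp, comp_sub]
        erw [← he₁, ← he₂]
        congr 1
        · rw [← assoc, ← assoc]
          congr 1
          have h1 := η.naturality f
          dsimp at h1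
          rw [← h1]
        · rw [← assoc, hη, R.adj_iR.right_triangle_components, id_comp]
      comm₂ := by
        dsimp only [T, Functor.mapTriangle, binaryBiproductTriangle, Triangle.mk]
        apply biprod.hom_ext'
        · rw [biprod.inl_desc_assoc, biprod.inl_snd_assoc, zero_comp, sub_comp,
            assoc, assoc, he₁, he₂, ← R.iR.map_comp, ← R.iR.map_comp,
            biprod.inl_desc, biprod.inr_desc, key, sub_self]
        · rw [biprod.inr_desc_assoc, biprod.inr_snd_assoc, assoc, he₁,
            ← R.iR.map_comp, biprod.inl_desc]
      comm₃ := by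
        dsimp only [T, Functor.mapTriangle, binaryBiproductTriangle, Triangle.mk]
        rw [zero_comp, assoc, ← R.iR.map_comp_assoc, hxw, R.iR.map_zero, zero_comp,
          comp_zero] }
    with hφ
  have h₁ : IsIso φ.hom₁ := by rw [hφ]; exact R.isIso_iR_unit _
  have h₂ : IsIso φ.hom₂ := by
    rw [hφ]
    dsimp only [T, Functor.mapTriangle, binaryBiproductTriangle, Triangle.mk]
    refine ⟨⟨biprod.lift (-q) (p ≫ (inv (η.app Z) : R.iR.obj (R.i.obj Z) ⟶ Z) + q ≫ f),
      ?_, ?_⟩⟩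
    · apply biprod.hom_ext'
      · apply biprod.hom_ext
        · simp [binaryBiproductTriangle, sub_comp, comp_sub, add_comp, comp_add,
            he₁p, he₁q, he₂p, he₂q, he₁p0, he₁q0, he₂p0, he₂q0]
        · simp [binaryBiproductTriangle, sub_comp, comp_sub, add_comp, comp_add,
            he₁p, he₁q, he₂p, he₂q, he₁p0, he₁q0, he₂p0, he₂q0]
      · apply biprod.hom_ext
        · simp [binaryBiproductTriangle, sub_comp, comp_sub, add_comp, comp_add,
            he₁p, he₁q, he₂p, he₂q, he₁p0, he₁q0, he₂p0, he₂q0]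
        · simp [binaryBiproductTriangle, sub_comp, comp_sub, add_comp, comp_add,
            he₁p, he₁q, he₂p, he₂q, he₁p0, he₁q0, he₂p0, he₂q0]
    · show _ = 𝟙 (R.iR.obj (R.i.obj Z ⊞ R.jL.obj A))
      rw [biprod.lift_desc, ← htot]
      simp only [comp_sub, comp_add, add_comp, sub_comp, neg_comp, comp_neg, assoc,
        he₁p, he₁q, he₂p, he₂q, he₁p0, he₁q0, he₂p0, he₂q0, comp_zero, zero_comp,
        IsIso.inv_hom_id_assoc, neg_sub, sub_neg_eq_add]
      abel
  have h₃ : IsIso φ.hom₃ := isIso₃_of_isIso₁₂ φ hbi hiT h₁ h₂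
  have hb_iso : IsIso (η.app Z ≫ R.iR.map x) := by rw [hφ] at h₃; exact h₃
  haveI := R.isIso_jL_unit A
  haveI := hy_iso
  haveI := hb_iso
  refine ⟨asIso (R.adj_jL.unit.app A ≫ R.j.map y), asIso (η.app Z ≫ R.iR.map x), ?_⟩
  rw [asIso_hom, asIso_hom, ← R.iR.map_comp, R.jL.map_comp, assoc]
  have hnat := R.adj_jL.counit.naturality y
  dsimp at hnat
  rw [hnat, ← assoc, R.adj_jL.left_triangle_components, id_comp, key]
end

section
/- (Theorem A, square-zero kernel) Given a recollement (T', T, T''), the kernel ideal of the functor Φ : T → (i_ρ j_λ ↓ T'), X ↦ (j X, i_ρ X; i_ρ φ_X), is square zero: if f : X → Y and f' : Y → W satisfy j f = 0 = i_ρ f and j f' = 0 = i_ρ f', then f' ∘ f = 0. Consequently Φ is an epivalence: full, dense, and detecting isomorphisms. -/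
open CategoryTheory Category Limits Pretriangulated Preadditive

variable {T₁ T₂ T₃ : Type*}
  [Category T₁] [Category T₂] [Category T₃]
  [HasZeroObject T₁] [HasZeroObject T₂] [HasZeroObject T₃]
  [Preadditive T₁] [Preadditive T₂] [Preadditive T₃]
  [HasShift T₁ ℤ] [HasShift T₂ ℤ] [HasShift T₃ ℤ]
  [∀ n : ℤ, (shiftFunctor T₁ n).Additive]
  [∀ n : ℤ, (shiftFunctor T₂ n).Additive]
  [∀ n : ℤ, (shiftFunctor T₃ n).Additive]
  [Pretriangulated T₁] [Pretriangulated T₂] [Pretriangulated T₃]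

namespace Recollement

variable (R : Recollement T₁ T₂ T₃)

private lemma isIso_of_comp_eq_id {C : Type*} [Category C] {X Y : C} (u : X ⟶ Y) (v : Y ⟶ X)
    [IsIso u] (h : u ≫ v = 𝟙 X) : IsIso v :=
  ⟨u, by rw [← cancel_epi u, ← assoc, h, id_comp, comp_id], h⟩

/-- There are no nonzero maps from a (shifted) object in the image of `i`
to an object in the image of `j_ρ`. -/
lemma hom_to_jR_zero {A : T₁} {B : T₃} (g : (R.i.obj A)⟦(-1 : ℤ)⟧ ⟶ R.jR.obj B) : g = 0 := by
  letI := R.j_commShift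
  haveI := R.j_isTriangulated
  have h1 : IsZero ((R.j.obj (R.i.obj A))⟦(-1 : ℤ)⟧) :=
    (shiftFunctor T₃ (-1 : ℤ)).map_isZero (R.ji_zero A)
  have hz : IsZero (R.j.obj ((R.i.obj A)⟦(-1 : ℤ)⟧)) :=
    h1.of_iso ((R.j.commShiftIso (-1 : ℤ)).app (R.i.obj A))
  exact (R.adj_jR.homEquiv _ _).symm.injective (hz.eq_of_src _ _)

/-- The kernel ideal is square zero. -/
lemma sq_zero {X Y W : T₂} (f : X ⟶ Y) (f' : Y ⟶ W)
    (h1 : R.j.map f = 0) (h2 : R.iR.map f' = 0) : f ≫ f' = 0 := by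
  letI := R.i_commShift; haveI := R.i_isTriangulated
  letI := R.jR_commShift; haveI := R.jR_isTriangulated
  have hc : (Triangle.mk (R.adj_iR.counit.app Y) (R.adj_jR.unit.app Y) (R.δ Y)).mor₁ ≫ f' = 0 := by
    have hnat := R.adj_iR.counit.naturality f'
    dsimp at hnat ⊢
    erw [← hnat, h2, Functor.map_zero, zero_comp]; rfl
  obtain ⟨h, hh⟩ := Triangle.yoneda_exact₂ _ (R.tri₁ Y) f' hc
  dsimp at hh
  have h4 : f ≫ R.adj_jR.unit.app Y = 0 := by
    have hnat := R.adj_jR.unit.naturality f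
    dsimp at hnat
    rw [hnat, h1, Functor.map_zero, comp_zero]
  erw [hh, ← assoc, h4, zero_comp]

/-- Fullness of the comparison functor. -/
lemma full_aux (X Y : T₂) (a : R.j.obj X ⟶ R.j.obj Y) (b : R.iR.obj X ⟶ R.iR.obj Y)
    (hab : R.iR.map (R.jL.map a) ≫ R.iR.map (R.adj_jL.counit.app Y) =
      R.iR.map (R.adj_jL.counit.app X) ≫ b) :
    ∃ f : X ⟶ Y, R.j.map f = a ∧ R.iR.map f = b := by
  letI := R.i_commShift; haveI := R.i_isTriangulated; haveI := R.i_full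
  letI := R.iR_commShift; haveI := R.iR_isTriangulated
  letI := R.j_commShift; haveI := R.j_isTriangulated
  set T : Triangle T₂ := Triangle.mk (R.adj_jL.counit.app X) (R.adj_iL.unit.app X) (R.σ X)
    with hT
  have hTd : T ∈ distTriang T₂ := R.tri₂ X
  have hinv : T.invRotate ∈ distTriang T₂ := inv_rot_of_distTriang _ hTd
  -- the obstruction vanishes after applying `iR`
  have hiRmor : R.iR.map (T.invRotate.mor₁ ≫ (R.jL.map a ≫ R.adj_jL.counit.app Y)) = 0 := by
    erw [Functor.map_comp, Functor.map_comp, hab, ← assoc, ← Functor.map_comp]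
    have hz : T.invRotate.mor₁ ≫ R.adj_jL.counit.app X = 0 :=
      comp_distTriang_mor_zero₁₂ _ hinv
    rw [hz, Functor.map_zero, zero_comp]
  -- the obstruction vanishes
  have ho : T.invRotate.mor₁ ≫ (R.jL.map a ≫ R.adj_jL.counit.app Y) = 0 := by
    obtain ⟨o', ho'⟩ := Triangle.coyoneda_exact₂ _ (R.tri₁ Y)
      (T.invRotate.mor₁ ≫ (R.jL.map a ≫ R.adj_jL.counit.app Y))
      (R.hom_to_jR_zero (A := R.iL.obj X) (B := R.j.obj Y) _)
    have hiRo' : R.iR.map o' = 0 := by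
      have h5 : R.iR.map (o' ≫ (Triangle.mk (R.adj_iR.counit.app Y) (R.adj_jR.unit.app Y)
          (R.δ Y)).mor₁) = 0 := by
        rw [← ho']; exact hiRmor
      haveI : IsIso (R.iR.map (R.adj_iR.counit.app Y)) := by
        haveI := R.isIso_iR_unit (R.iR.obj Y)
        exact isIso_of_comp_eq_id _ _ (R.adj_iR.right_triangle_components Y)
      rw [Functor.map_comp] at h5
      erw [← cancel_mono (R.iR.map (R.adj_iR.counit.app Y)), zero_comp]
      exact h5
    have ho'0 : o' = 0 := by
      obtain ⟨k, hk⟩ := R.i.map_surjective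
        (((R.i.commShiftIso (-1 : ℤ)).hom.app (R.iL.obj X)) ≫ o')
      have hiRk : R.iR.map (R.i.map k) = 0 := by erw [hk, Functor.map_comp, hiRo', comp_zero]
      have hk0 : k = 0 := by
        haveI := R.isIso_iR_unit (R.iR.obj Y)
        have h6 := R.adj_iR.unit.naturality k
        dsimp at h6
        rw [← cancel_mono (R.adj_iR.unit.app (R.iR.obj Y)), h6, hiRk, comp_zero, zero_comp]
      rw [hk0, Functor.map_zero] at hk
      erw [← cancel_epi ((R.i.commShiftIso (-1 : ℤ)).hom.app (R.iL.obj X)), ← hk, comp_zero]; rfl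
    erw [ho', ho'0, zero_comp]; rfl
  obtain ⟨f₀', hf₀⟩ := Triangle.yoneda_exact₂ _ hinv _ ho
  have hex : ∃ f : X ⟶ Y, R.adj_jL.counit.app X ≫ f = R.jL.map a ≫ R.adj_jL.counit.app Y :=
    ⟨f₀', hf₀.symm⟩
  obtain ⟨f₀, hkey⟩ := hex
  have hjf₀ : R.j.map f₀ = a := by
    have h7 := R.adj_jL.unit.naturality a
    have h8 := congrArg R.j.map hkey
    rw [Functor.map_comp, Functor.map_comp] at h8
    have h10 := congrArg (fun t => R.adj_jL.unit.app (R.j.obj X) ≫ t) h8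
    dsimp at h7 h10
    rw [R.adj_jL.right_triangle_components_assoc, ← assoc, ← h7, assoc] at h10
    simpa using h10
  -- correction term
  have hd0 : R.iR.map (R.adj_jL.counit.app X) ≫ (R.iR.map f₀ - b) = 0 := by
    rw [comp_sub, ← Functor.map_comp, hkey, Functor.map_comp, hab, sub_self]
  have hTT : R.iR.mapTriangle.obj T ∈ distTriang T₁ := R.iR.map_distinguished _ hTd
  obtain ⟨e', he'⟩ := Triangle.yoneda_exact₂ _ hTT (R.iR.map f₀ - b) (by exact hd0)
  have hex2 : ∃ e : R.iR.obj (R.i.obj (R.iL.obj X)) ⟶ R.iR.obj Y,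
      R.iR.map f₀ - b = R.iR.map (R.adj_iL.unit.app X) ≫ e := ⟨e', he'⟩
  obtain ⟨e, he⟩ := hex2
  have hiRm : R.iR.map (R.i.map (R.adj_iR.unit.app (R.iL.obj X) ≫ e) ≫
      R.adj_iR.counit.app Y) = e := by
    haveI := R.isIso_iR_unit (R.iL.obj X)
    have h9 := R.adj_iR.unit.naturality (R.adj_iR.unit.app (R.iL.obj X) ≫ e)
    have h9' := congrArg (fun t => t ≫ R.iR.map (R.adj_iR.counit.app Y)) h9
    dsimp at h9'
    simp only [assoc] at h9'
    rw [R.adj_iR.right_triangle_components, comp_id, ← Functor.map_comp] at h9'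
    exact ((cancel_epi (R.adj_iR.unit.app (R.iL.obj X))).mp h9').symm
  have hc : ∃ c : X ⟶ Y, R.j.map c = 0 ∧ R.iR.map c = R.iR.map (R.adj_iL.unit.app X) ≫ e := by
    refine ⟨R.adj_iL.unit.app X ≫ (R.i.map (R.adj_iR.unit.app (R.iL.obj X) ≫ e) ≫
      R.adj_iR.counit.app Y), ?_, ?_⟩
    · rw [Functor.map_comp, (R.ji_zero (R.iL.obj X)).eq_zero_of_src (R.j.map _), comp_zero]
    · rw [Functor.map_comp, hiRm]
  obtain ⟨c, hc1, hc2⟩ := hc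
  exact ⟨f₀ - c, by rw [Functor.map_sub, hjf₀, hc1, sub_zero],
    by rw [Functor.map_sub, hc2, ← he, sub_sub_cancel]⟩

/-- The comparison functor reflects isomorphisms. -/
lemma iso_aux (X Y : T₂) (f : X ⟶ Y) (h1 : IsIso (R.j.map f)) (h2 : IsIso (R.iR.map f)) :
    IsIso f := by
  letI := R.j_commShift; haveI := R.j_isTriangulated
  letI := R.iR_commShift; haveI := R.iR_isTriangulated
  have hnat : R.iR.map (R.jL.map (R.j.map f)) ≫ R.iR.map (R.adj_jL.counit.app Y) =
      R.iR.map (R.adj_jL.counit.app X) ≫ R.iR.map f := by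
    rw [← Functor.map_comp, ← Functor.map_comp]
    congr 1
    exact R.adj_jL.counit.naturality f
  have hcompat : R.iR.map (R.jL.map (inv (R.j.map f))) ≫ R.iR.map (R.adj_jL.counit.app X) =
      R.iR.map (R.adj_jL.counit.app Y) ≫ inv (R.iR.map f) := by
    rw [IsIso.eq_comp_inv, assoc, ← hnat, ← assoc, ← Functor.map_comp, ← R.jL.map_comp,
      IsIso.inv_hom_id, R.jL.map_id, R.iR.map_id, id_comp]
  obtain ⟨g, hg1, hg2⟩ := R.full_aux Y X (inv (R.j.map f)) (inv (R.iR.map f)) hcompat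
  have hu1 : R.j.map (f ≫ g - 𝟙 X) = 0 := by
    rw [Functor.map_sub, Functor.map_comp, hg1, IsIso.hom_inv_id]; simp
  have hu2 : R.iR.map (f ≫ g - 𝟙 X) = 0 := by
    rw [Functor.map_sub, Functor.map_comp, hg2, IsIso.hom_inv_id]; simp
  have hv1 : R.j.map (g ≫ f - 𝟙 Y) = 0 := by
    rw [Functor.map_sub, Functor.map_comp, hg1, IsIso.inv_hom_id]; simp
  have hv2 : R.iR.map (g ≫ f - 𝟙 Y) = 0 := by
    rw [Functor.map_sub, Functor.map_comp, hg2, IsIso.inv_hom_id]; simp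
  have hsqu : (f ≫ g - 𝟙 X) ≫ (f ≫ g - 𝟙 X) = 0 := R.sq_zero _ _ hu1 hu2
  have hsqv : (g ≫ f - 𝟙 Y) ≫ (g ≫ f - 𝟙 Y) = 0 := R.sq_zero _ _ hv1 hv2
  have hfg : f ≫ (g ≫ (𝟙 X - (f ≫ g - 𝟙 X))) = 𝟙 X := by
    have hfgu : (f ≫ g) ≫ (f ≫ g - 𝟙 X) = f ≫ g - 𝟙 X := by
      have hsplit : (f ≫ g) ≫ (f ≫ g - 𝟙 X) =
          (f ≫ g - 𝟙 X) ≫ (f ≫ g - 𝟙 X) + (𝟙 X) ≫ (f ≫ g - 𝟙 X) := by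
        rw [← add_comp]
        congr 1
        abel
      rw [hsplit, hsqu, zero_add, id_comp]
    have expand : (f ≫ g) ≫ (𝟙 X - (f ≫ g - 𝟙 X)) = 𝟙 X := by
      rw [comp_sub, comp_id, hfgu]
      abel
    rw [← assoc]
    exact expand
  have hgf : ((𝟙 Y - (g ≫ f - 𝟙 Y)) ≫ g) ≫ f = 𝟙 Y := by
    have hgfv : (g ≫ f - 𝟙 Y) ≫ (g ≫ f) = g ≫ f - 𝟙 Y := by
      have hsplit : (g ≫ f - 𝟙 Y) ≫ (g ≫ f) =
          (g ≫ f - 𝟙 Y) ≫ (g ≫ f - 𝟙 Y) + (g ≫ f - 𝟙 Y) ≫ (𝟙 Y) := by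
        rw [← comp_add]
        congr 1
        abel
      rw [hsplit, hsqv, zero_add, comp_id]
    have expand : (𝟙 Y - (g ≫ f - 𝟙 Y)) ≫ (g ≫ f) = 𝟙 Y := by
      rw [sub_comp, id_comp, hgfv]
      abel
    rw [assoc]
    exact expand
  have hlr : (𝟙 Y - (g ≫ f - 𝟙 Y)) ≫ g = g ≫ (𝟙 X - (f ≫ g - 𝟙 X)) := by
    calc (𝟙 Y - (g ≫ f - 𝟙 Y)) ≫ g
        = ((𝟙 Y - (g ≫ f - 𝟙 Y)) ≫ g) ≫ (f ≫ (g ≫ (𝟙 X - (f ≫ g - 𝟙 X)))) := by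
          rw [hfg, comp_id]
      _ = (((𝟙 Y - (g ≫ f - 𝟙 Y)) ≫ g) ≫ f) ≫ (g ≫ (𝟙 X - (f ≫ g - 𝟙 X))) := by
          simp only [assoc]
      _ = g ≫ (𝟙 X - (f ≫ g - 𝟙 X)) := by rw [hgf, id_comp]
  exact ⟨g ≫ (𝟙 X - (f ≫ g - 𝟙 X)), hfg, by rw [← hlr]; exact hgf⟩

set_option maxHeartbeats 1000000 in
/-- Denseness of the comparison functor. -/
lemma dense_aux (A : T₃) (Z : T₁) (f : R.iR.obj (R.jL.obj A) ⟶ Z) :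
    ∃ (C : T₂) (a : A ≅ R.j.obj C) (b : Z ≅ R.iR.obj C),
      R.iR.map (R.jL.map a.hom) ≫ R.iR.map (R.adj_jL.counit.app C) = f ≫ b.hom := by
  letI := R.i_commShift; haveI := R.i_isTriangulated
  letI := R.j_commShift; haveI := R.j_isTriangulated
  letI := R.iR_commShift; haveI := R.iR_isTriangulated
  -- the gluing triangle
  obtain ⟨s, hs1, hs2⟩ : ∃ s : R.i.obj (R.iR.obj (R.jL.obj A)) ⟶ R.i.obj Z ⊞ R.jL.obj A,
      s ≫ biprod.fst = -(R.i.map f) ∧ s ≫ biprod.snd = R.adj_iR.counit.app (R.jL.obj A) :=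
    ⟨biprod.lift (-(R.i.map f)) (R.adj_iR.counit.app (R.jL.obj A)),
      biprod.lift_fst _ _, biprod.lift_snd _ _⟩
  obtain ⟨C, g, hmor, hTs⟩ := Pretriangulated.distinguished_cocone_triangle s
  have hsg : s ≫ g = 0 := comp_distTriang_mor_zero₁₂ _ hTs
  have hstot : s = (s ≫ biprod.fst) ≫ biprod.inl + (s ≫ biprod.snd) ≫ biprod.inr := by
    conv_lhs => rw [← comp_id s, ← biprod.total]
    simp only [comp_add, ← assoc]
  have hψq : R.adj_iR.counit.app (R.jL.obj A) ≫ (biprod.inr ≫ g) =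
      R.i.map f ≫ (biprod.inl ≫ g) := by
    have h0 := hsg
    rw [hstot, hs1, hs2, add_comp, assoc, assoc, neg_comp, neg_add_eq_zero] at h0
    exact h0.symm
  -- the `j` side
  have hTj := R.j.map_distinguished _ hTs
  haveI : IsIso (R.j.map g) := by
    exact (Triangle.isZero₁_iff_isIso₂ _ hTj).mp (R.ji_zero (R.iR.obj (R.jL.obj A)))
  haveI : IsIso (R.j.map (biprod.inr : R.jL.obj A ⟶ R.i.obj Z ⊞ R.jL.obj A)) := by
    refine ⟨R.j.map biprod.snd, ?_, ?_⟩
    · rw [← R.j.map_comp, biprod.inr_snd, R.j.map_id]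
    · have hsum : (biprod.snd ≫ biprod.inr : R.i.obj Z ⊞ R.jL.obj A ⟶ _) =
          𝟙 _ - biprod.fst ≫ biprod.inl := by
        rw [eq_sub_iff_add_eq, add_comm]
        exact biprod.total
      rw [← R.j.map_comp, hsum, Functor.map_sub, R.j.map_id, R.j.map_comp,
        (R.ji_zero Z).eq_zero_of_src (R.j.map (biprod.inl : R.i.obj Z ⟶ _)), comp_zero, sub_zero]
  haveI : IsIso (R.j.map (biprod.inr ≫ g)) := by
    rw [R.j.map_comp]; infer_instance
  haveI := R.isIso_jL_unit A
  -- the `iR` side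
  haveI : IsIso (R.iR.map (s ≫ biprod.snd)) := by
    rw [hs2]
    haveI := R.isIso_iR_unit (R.iR.obj (R.jL.obj A))
    exact isIso_of_comp_eq_id _ _ (R.adj_iR.right_triangle_components (R.jL.obj A))
  have hdec : R.iR.map s = R.iR.map (s ≫ biprod.fst) ≫
      R.iR.map (biprod.inl : R.i.obj Z ⟶ R.i.obj Z ⊞ R.jL.obj A) +
      R.iR.map (s ≫ biprod.snd) ≫
      R.iR.map (biprod.inr : R.jL.obj A ⟶ R.i.obj Z ⊞ R.jL.obj A) := by
    rw [← R.iR.map_comp, ← R.iR.map_comp, ← Functor.map_add, ← hstot]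
  obtain ⟨e2, he2l, he2r⟩ : ∃ (e2 : R.iR.obj (R.i.obj (R.iR.obj (R.jL.obj A))) ⊞
      R.iR.obj (R.i.obj Z) ≅ R.iR.obj (R.i.obj Z ⊞ R.jL.obj A)),
      biprod.inl ≫ e2.hom = R.iR.map s ∧
      R.iR.map (biprod.inl : R.i.obj Z ⟶ _) ≫ e2.inv = biprod.inr := by
    refine ⟨⟨biprod.desc (R.iR.map s) (R.iR.map biprod.inl),
      biprod.lift (R.iR.map biprod.snd ≫ inv (R.iR.map (s ≫ biprod.snd)))
        (R.iR.map biprod.fst - R.iR.map biprod.snd ≫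
          inv (R.iR.map (s ≫ biprod.snd)) ≫ R.iR.map (s ≫ biprod.fst)),
      ?_, ?_⟩, biprod.inl_desc _ _, ?_⟩
    · -- hom ≫ inv = 𝟙
      apply biprod.hom_ext'
      · rw [biprod.inl_desc_assoc, comp_id]
        apply biprod.hom_ext
        · rw [assoc, biprod.lift_fst, biprod.inl_fst, ← assoc, ← R.iR.map_comp,
            IsIso.hom_inv_id]
        · rw [assoc, biprod.lift_snd, biprod.inl_snd, comp_sub, ← R.iR.map_comp,
            ← assoc, ← assoc, ← R.iR.map_comp, IsIso.hom_inv_id, id_comp, sub_self]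
      · rw [biprod.inr_desc_assoc, comp_id]
        apply biprod.hom_ext
        · rw [assoc, biprod.lift_fst, biprod.inr_fst, ← assoc, ← R.iR.map_comp,
            biprod.inl_snd, Functor.map_zero, zero_comp]
        · rw [assoc, biprod.lift_snd, biprod.inr_snd, comp_sub, ← R.iR.map_comp,
            biprod.inl_fst, R.iR.map_id, ← assoc, ← R.iR.map_comp, biprod.inl_snd,
            Functor.map_zero, zero_comp, sub_zero]
    · -- inv ≫ hom = 𝟙
      rw [biprod.lift_desc, hdec]
      simp only [comp_add, comp_sub, sub_comp, add_comp, assoc, IsIso.inv_hom_id_assoc]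
      have htot : R.iR.map (biprod.fst : R.i.obj Z ⊞ R.jL.obj A ⟶ R.i.obj Z) ≫
          R.iR.map (biprod.inl : R.i.obj Z ⟶ R.i.obj Z ⊞ R.jL.obj A) +
          R.iR.map (biprod.snd : R.i.obj Z ⊞ R.jL.obj A ⟶ R.jL.obj A) ≫
          R.iR.map (biprod.inr : R.jL.obj A ⟶ R.i.obj Z ⊞ R.jL.obj A) =
          𝟙 (R.iR.obj (R.i.obj Z ⊞ R.jL.obj A)) := by
        rw [← R.iR.map_comp, ← R.iR.map_comp, ← Functor.map_add, biprod.total, R.iR.map_id]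
      rw [← htot]
      abel
    · -- iR inl ≫ e2.inv = inr
      apply biprod.hom_ext
      · dsimp only
        rw [assoc, biprod.lift_fst, biprod.inr_fst, ← assoc, ← R.iR.map_comp,
          biprod.inl_snd, Functor.map_zero, zero_comp]
      · dsimp only
        rw [assoc, biprod.lift_snd, biprod.inr_snd, comp_sub, ← R.iR.map_comp,
          biprod.inl_fst, R.iR.map_id, ← assoc, ← R.iR.map_comp, biprod.inl_snd,
          Functor.map_zero, zero_comp, sub_zero]
  -- T'' is distinguished
  have hT2 : Triangle.mk (R.iR.map s) (e2.inv ≫ biprod.snd)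
      (0 : R.iR.obj (R.i.obj Z) ⟶ (R.iR.obj (R.i.obj (R.iR.obj (R.jL.obj A))))⟦(1 : ℤ)⟧) ∈
      distTriang T₁ := by
    refine isomorphic_distinguished _ (binaryBiproductTriangle_distinguished
      (R.iR.obj (R.i.obj (R.iR.obj (R.jL.obj A)))) (R.iR.obj (R.i.obj Z))) _ ?_
    refine Triangle.isoMk _ _ (Iso.refl _) e2.symm (Iso.refl _) ?_ ?_ ?_
    · dsimp
      erw [id_comp, ← he2l, assoc, e2.hom_inv_id, comp_id]; rfl
    · dsimp
      erw [comp_id]; rfl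
    · dsimp
      erw [zero_comp, comp_zero]
  have hT1 := R.iR.map_distinguished _ hTs
  obtain ⟨h3, hIso3, h3comm⟩ : ∃ h3 : R.iR.obj C ⟶ R.iR.obj (R.i.obj Z), IsIso h3 ∧
      R.iR.map g ≫ h3 = e2.inv ≫ biprod.snd := by
    let E := Pretriangulated.isoTriangleOfIso₁₂ _ _ hT1 hT2 (Iso.refl _) (Iso.refl _)
      (by dsimp; erw [id_comp, comp_id]; rfl)
    refine ⟨E.hom.hom₃, ?_, ?_⟩
    · exact (inferInstance : IsIso ((Triangle.π₃).mapIso E).hom)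
    · have hc := E.hom.comm₂
      have h2 : E.hom.hom₂ = 𝟙 _ :=
        Pretriangulated.isoTriangleOfIso₁₂_hom_hom₂ _ _ hT1 hT2 _ _ _
      rw [h2] at hc
      exact hc.trans (id_comp _)
  haveI := hIso3
  have hkey3 : R.iR.map (biprod.inl ≫ g) ≫ h3 = 𝟙 _ := by
    rw [R.iR.map_comp, assoc, h3comm, ← assoc, he2r, biprod.inr_snd]
  haveI : IsIso (R.iR.map (biprod.inl ≫ g)) := by
    have hx : R.iR.map (biprod.inl ≫ g) = inv h3 := by
      rw [← comp_id (R.iR.map (biprod.inl ≫ g)), ← IsIso.hom_inv_id h3, ← assoc, hkey3,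
        id_comp]
    rw [hx]; infer_instance
  haveI := R.isIso_iR_unit Z
  -- assemble
  refine ⟨C, asIso (R.adj_jL.unit.app A) ≪≫ asIso (R.j.map (biprod.inr ≫ g)),
    asIso (R.adj_iR.unit.app Z) ≪≫ asIso (R.iR.map (biprod.inl ≫ g)), ?_⟩
  have hq : R.jL.map (R.adj_jL.unit.app A ≫ R.j.map (biprod.inr ≫ g)) ≫
      R.adj_jL.counit.app C = biprod.inr ≫ g := by
    rw [R.jL.map_comp, assoc]
    have hn := R.adj_jL.counit.naturality (biprod.inr ≫ g)
    dsimp at hn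
    rw [hn]
    simp
  have hmain : R.iR.map (biprod.inr ≫ g) =
      f ≫ (R.adj_iR.unit.app Z ≫ R.iR.map (biprod.inl ≫ g)) := by
    have h1 := congrArg R.iR.map hψq
    rw [R.iR.map_comp (R.adj_iR.counit.app (R.jL.obj A)) (biprod.inr ≫ g),
      R.iR.map_comp (R.i.map f) (biprod.inl ≫ g)] at h1
    have h2 := congrArg (fun t => R.adj_iR.unit.app (R.iR.obj (R.jL.obj A)) ≫ t) h1
    dsimp at h2
    rw [R.adj_iR.right_triangle_components_assoc] at h2
    have h3 := R.adj_iR.unit.naturality f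
    dsimp at h3
    rw [h2, ← assoc, ← h3, assoc]
  rw [Iso.trans_hom, asIso_hom, asIso_hom, Iso.trans_hom, asIso_hom, asIso_hom]
  rw [← R.iR.map_comp, hq, hmain]

end Recollement

/-- Theorem A, square-zero kernel: the kernel ideal of `Φ : T → (i_ρ j_λ ↓ T')` is square
zero; consequently `Φ` is an epivalence (full, dense, and detecting isomorphisms). -/
theorem comparison_functor_square_zero_kernel (R : Recollement T₁ T₂ T₃) :
    (∀ (X Y W : T₂) (f : X ⟶ Y) (f' : Y ⟶ W),
      R.j.map f = 0 → R.iR.map f = 0 → R.j.map f' = 0 → R.iR.map f' = 0 → f ≫ f' = 0) ∧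
    (∀ (X Y : T₂) (a : R.j.obj X ⟶ R.j.obj Y) (b : R.iR.obj X ⟶ R.iR.obj Y),
      R.iR.map (R.jL.map a) ≫ R.iR.map (R.adj_jL.counit.app Y) =
        R.iR.map (R.adj_jL.counit.app X) ≫ b →
      ∃ f : X ⟶ Y, R.j.map f = a ∧ R.iR.map f = b) ∧
    (∀ (A : T₃) (Z : T₁) (f : R.iR.obj (R.jL.obj A) ⟶ Z),
      ∃ (C : T₂) (a : A ≅ R.j.obj C) (b : Z ≅ R.iR.obj C),
        R.iR.map (R.jL.map a.hom) ≫ R.iR.map (R.adj_jL.counit.app C) = f ≫ b.hom) ∧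
    (∀ (X Y : T₂) (f : X ⟶ Y), IsIso (R.j.map f) → IsIso (R.iR.map f) → IsIso f) := by
  exact ⟨fun X Y W f f' h1 h2 h3 h4 => R.sq_zero f f' h1 h4,
    R.full_aux, R.dense_aux, R.iso_aux⟩
end

section
/- Given a recollement (T', T, T''), for any objects X, Y ∈ T there is an exact sequence of abelian groups Hom_T(Σ i i_ρ j_λ j X, Y) → Hom_T(X, Y) → Hom_{(i_ρ j_λ ↓ T')}(Φ X, Φ Y) → 0, where the second map is induced by the functor Φ : X ↦ (j X, i_ρ X; i_ρ φ_X). -/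
open CategoryTheory Category Limits Pretriangulated Preadditive

variable {T₁ T₂ T₃ : Type*}
  [Category T₁] [Category T₂] [Category T₃]
  [HasZeroObject T₁] [HasZeroObject T₂] [HasZeroObject T₃]
  [Preadditive T₁] [Preadditive T₂] [Preadditive T₃]
  [HasShift T₁ ℤ] [HasShift T₂ ℤ] [HasShift T₃ ℤ]
  [∀ n : ℤ, (shiftFunctor T₁ n).Additive]
  [∀ n : ℤ, (shiftFunctor T₂ n).Additive]
  [∀ n : ℤ, (shiftFunctor T₃ n).Additive]
  [Pretriangulated T₁] [Pretriangulated T₂] [Pretriangulated T₃]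

section AuxLemmas

variable (R : Recollement T₁ T₂ T₃)

/-- Any morphism `j_λ A ⟶ i B` vanishes. -/
lemma Recollement.hom_jL_i_zero {A : T₃} {B : T₁} (h : R.jL.obj A ⟶ R.i.obj B) : h = 0 := by
  letI := R.jL_commShift
  haveI : R.jL.IsTriangulated := R.jL_isTriangulated
  have h1 : R.j.map h = 0 := (R.ji_zero B).eq_of_tgt _ _
  calc h = R.jL.map (R.adj_jL.unit.app A) ≫ R.adj_jL.counit.app (R.jL.obj A) ≫ h := by
        simp
    _ = R.jL.map (R.adj_jL.unit.app A) ≫ R.jL.map (R.j.map h) ≫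
          R.adj_jL.counit.app (R.i.obj B) := by
        congr 1
        have := R.adj_jL.counit.naturality h
        simp only [Functor.comp_map, Functor.id_map] at this
        rw [this]
    _ = 0 := by rw [h1, Functor.map_zero, zero_comp, comp_zero]

/-- Any morphism `i A ⟶ j_ρ B` vanishes. -/
lemma Recollement.hom_i_jR_zero {A : T₁} {B : T₃} (h : R.i.obj A ⟶ R.jR.obj B) : h = 0 := by
  letI := R.jR_commShift
  haveI : R.jR.IsTriangulated := R.jR_isTriangulated
  have h1 : (R.adj_jR.homEquiv _ _).symm h = 0 := (R.ji_zero A).eq_of_src _ _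
  have h2 := congrArg (R.adj_jR.homEquiv (R.i.obj A) B) h1
  rw [Equiv.apply_symm_apply] at h2
  rw [h2, Adjunction.homEquiv_unit, Functor.map_zero, comp_zero]

lemma Recollement.isZero_iR_jR (B : T₃) : IsZero (R.iR.obj (R.jR.obj B)) := by
  letI := R.iR_commShift
  haveI : R.iR.IsTriangulated := R.iR_isTriangulated
  rw [IsZero.iff_id_eq_zero]
  have h1 : (R.adj_iR.homEquiv _ _).symm (𝟙 (R.iR.obj (R.jR.obj B))) = 0 :=
    R.hom_i_jR_zero _
  have h2 := congrArg (R.adj_iR.homEquiv (R.iR.obj (R.jR.obj B)) (R.jR.obj B)) h1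
  rw [Equiv.apply_symm_apply] at h2
  rw [h2, Adjunction.homEquiv_unit, Functor.map_zero, comp_zero]

lemma Recollement.isZero_j_shift_i (W : T₁) :
    IsZero (R.j.obj ((R.i.obj W)⟦(1 : ℤ)⟧)) := by
  letI := R.j_commShift
  haveI : R.j.IsTriangulated := R.j_isTriangulated
  have h1 : IsZero ((R.j.obj (R.i.obj W))⟦(1 : ℤ)⟧) :=
    (shiftFunctor T₃ (1 : ℤ)).map_isZero (R.ji_zero W)
  exact h1.of_iso ((R.j.commShiftIso (1 : ℤ)).app (R.i.obj W))

end AuxLemmas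

/-- For each `X, Y ∈ T` there is an exact sequence
`Hom(Σ i i_ρ j_λ j X, Y) → Hom(X, Y) → Hom(Φ X, Φ Y) → 0`,
the first map being precomposition with `δ_{j_λ j X} ∘ j_ρ φ'_{j X} ∘ η_X` and the second
induced by `Φ`. Exactness is expressed as surjectivity of `Φ` on Hom-groups and the
kernel of `Φ` being the image of the first map. -/
theorem hom_exact_sequence (R : Recollement T₁ T₂ T₃) :
    ∀ X Y : T₂,
      (∀ (a : R.j.obj X ⟶ R.j.obj Y) (b : R.iR.obj X ⟶ R.iR.obj Y),
        R.iR.map (R.jL.map a) ≫ R.iR.map (R.adj_jL.counit.app Y) =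
          R.iR.map (R.adj_jL.counit.app X) ≫ b →
        ∃ f : X ⟶ Y, R.j.map f = a ∧ R.iR.map f = b) ∧
      (∀ f : X ⟶ Y,
        (R.j.map f = 0 ∧ R.iR.map f = 0) ↔
        ∃ t : (R.i.obj (R.iR.obj (R.jL.obj (R.j.obj X))))⟦(1 : ℤ)⟧ ⟶ Y,
          f = (R.adj_jR.unit.app X ≫ R.jR.map (R.adj_jL.unit.app (R.j.obj X)) ≫
            R.δ (R.jL.obj (R.j.obj X))) ≫ t) := by
  letI := R.i_commShift; letI := R.iR_commShift; letI := R.j_commShift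
  letI := R.jL_commShift; letI := R.jR_commShift
  haveI : R.i.IsTriangulated := R.i_isTriangulated
  haveI : R.iR.IsTriangulated := R.iR_isTriangulated
  haveI : R.j.IsTriangulated := R.j_isTriangulated
  haveI : R.jL.IsTriangulated := R.jL_isTriangulated
  haveI : R.jR.IsTriangulated := R.jR_isTriangulated
  intro X Y
  constructor
  · -- surjectivity
    intro a b H
    haveI : IsIso (R.adj_jL.unit.app (R.j.obj X)) := R.isIso_jL_unit _
    haveI : IsIso (R.adj_jL.unit.app (R.j.obj Y)) := R.isIso_jL_unit _
    haveI : IsIso (R.j.map (R.adj_jL.counit.app X)) := by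
      haveI : IsIso (R.adj_jL.unit.app (R.j.obj X) ≫ R.j.map (R.adj_jL.counit.app X)) := by
        simp only [R.adj_jL.right_triangle_components]
        exact inferInstanceAs (IsIso (𝟙 _))
      exact IsIso.of_isIso_comp_left (R.adj_jL.unit.app (R.j.obj X)) _
    have hja : R.j.map (R.jL.map a) ≫ R.j.map (R.adj_jL.counit.app Y)
        = R.j.map (R.adj_jL.counit.app X) ≫ a := by
      rw [← cancel_epi (R.adj_jL.unit.app (R.j.obj X))]
      calc R.adj_jL.unit.app (R.j.obj X) ≫ R.j.map (R.jL.map a) ≫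
              R.j.map (R.adj_jL.counit.app Y)
          = a ≫ R.adj_jL.unit.app (R.j.obj Y) ≫ R.j.map (R.adj_jL.counit.app Y) := by
            rw [← assoc, ← assoc]
            congr 1
            have := R.adj_jL.unit.naturality a
            simp only [Functor.comp_map, Functor.id_map] at this
            exact this.symm
        _ = a := by rw [R.adj_jL.right_triangle_components]; simp
        _ = R.adj_jL.unit.app (R.j.obj X) ≫ R.j.map (R.adj_jL.counit.app X) ≫ a := by
            rw [← assoc, R.adj_jL.right_triangle_components]; simp
    have hcomm : R.δ X ≫ (R.i.map b)⟦(1 : ℤ)⟧' = R.jR.map a ≫ R.δ Y := by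
      have hnX : R.jR.map (R.j.map (R.adj_jL.counit.app X)) ≫ R.δ X =
          R.δ (R.jL.obj (R.j.obj X)) ≫
            (R.i.map (R.iR.map (R.adj_jL.counit.app X)))⟦(1 : ℤ)⟧' := by
        have h := R.δ_natural (R.adj_jL.counit.app X)
        simp only [Functor.id_obj, Functor.comp_obj] at h
        exact h
      have hnY : R.jR.map (R.j.map (R.adj_jL.counit.app Y)) ≫ R.δ Y =
          R.δ (R.jL.obj (R.j.obj Y)) ≫
            (R.i.map (R.iR.map (R.adj_jL.counit.app Y)))⟦(1 : ℤ)⟧' := by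
        have h := R.δ_natural (R.adj_jL.counit.app Y)
        simp only [Functor.id_obj, Functor.comp_obj] at h
        exact h
      have hna : R.jR.map (R.j.map (R.jL.map a)) ≫ R.δ (R.jL.obj (R.j.obj Y)) =
          R.δ (R.jL.obj (R.j.obj X)) ≫
            (R.i.map (R.iR.map (R.jL.map a)))⟦(1 : ℤ)⟧' := by
        have h := R.δ_natural (R.jL.map a)
        exact h
      rw [← cancel_epi (R.jR.map (R.j.map (R.adj_jL.counit.app X)))]
      calc R.jR.map (R.j.map (R.adj_jL.counit.app X)) ≫ R.δ X ≫ (R.i.map b)⟦(1 : ℤ)⟧'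
          = (R.δ (R.jL.obj (R.j.obj X)) ≫
              (R.i.map (R.iR.map (R.adj_jL.counit.app X)))⟦(1 : ℤ)⟧') ≫
              (R.i.map b)⟦(1 : ℤ)⟧' := by
            rw [← assoc, hnX]
        _ = R.δ (R.jL.obj (R.j.obj X)) ≫
              ((R.i.map (R.iR.map (R.jL.map a)) ≫
                R.i.map (R.iR.map (R.adj_jL.counit.app Y)))⟦(1 : ℤ)⟧') := by
            rw [assoc]
            congr 1
            rw [← Functor.map_comp, ← Functor.map_comp, ← Functor.map_comp, H,
              Functor.map_comp]
        _ = (R.jR.map (R.j.map (R.jL.map a)) ≫ R.δ (R.jL.obj (R.j.obj Y))) ≫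
              (R.i.map (R.iR.map (R.adj_jL.counit.app Y)))⟦(1 : ℤ)⟧' := by
            rw [Functor.map_comp, hna, assoc]
        _ = R.jR.map (R.j.map (R.jL.map a)) ≫
              R.jR.map (R.j.map (R.adj_jL.counit.app Y)) ≫ R.δ Y := by
            rw [assoc, hnY]
        _ = R.jR.map (R.j.map (R.adj_jL.counit.app X)) ≫ R.jR.map a ≫ R.δ Y := by
            rw [← assoc, ← Functor.map_comp, hja, Functor.map_comp, assoc]
    obtain ⟨f, hf1, hf2⟩ : ∃ f : X ⟶ Y, R.adj_iR.counit.app X ≫ f =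
        R.i.map b ≫ R.adj_iR.counit.app Y ∧
        R.adj_jR.unit.app X ≫ R.jR.map a = f ≫ R.adj_jR.unit.app Y :=
      complete_distinguished_triangle_morphism₂ _ _
      (R.tri₁ X) (R.tri₁ Y) (R.i.map b) (R.jR.map a) hcomm
    dsimp at hf1 hf2
    refine ⟨f, ?_, ?_⟩
    · apply (R.adj_jR.homEquiv X (R.j.obj Y)).injective
      rw [Adjunction.homEquiv_unit, Adjunction.homEquiv_unit]
      have hnat : f ≫ R.adj_jR.unit.app Y =
          R.adj_jR.unit.app X ≫ R.jR.map (R.j.map f) := by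
        simpa using R.adj_jR.unit.naturality f
      rw [← hnat]
      exact hf2.symm
    · have hnat := R.adj_iR.unit.naturality b
      simp only [Functor.comp_map, Functor.id_map] at hnat
      calc R.iR.map f
          = (R.adj_iR.unit.app (R.iR.obj X) ≫ R.iR.map (R.adj_iR.counit.app X)) ≫
              R.iR.map f := by rw [R.adj_iR.right_triangle_components]; simp
        _ = R.adj_iR.unit.app (R.iR.obj X) ≫ R.iR.map (R.adj_iR.counit.app X ≫ f) := by
            rw [assoc, ← Functor.map_comp]
        _ = R.adj_iR.unit.app (R.iR.obj X) ≫
              R.iR.map (R.i.map b ≫ R.adj_iR.counit.app Y) := by rw [hf1]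
        _ = (R.adj_iR.unit.app (R.iR.obj X) ≫ R.iR.map (R.i.map b)) ≫
              R.iR.map (R.adj_iR.counit.app Y) := by rw [Functor.map_comp, assoc]
        _ = (b ≫ R.adj_iR.unit.app (R.iR.obj Y)) ≫
              R.iR.map (R.adj_iR.counit.app Y) := by rw [← hnat]
        _ = b := by rw [assoc, R.adj_iR.right_triangle_components]; simp
  · -- exactness
    intro f
    constructor
    · rintro ⟨hj, hi⟩
      -- Step 1 : `f` kills the unit of `j ⊣ j_ρ`
      have h1 : f ≫ R.adj_jR.unit.app Y = 0 := by
        have hnat : f ≫ R.adj_jR.unit.app Y =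
            R.adj_jR.unit.app X ≫ R.jR.map (R.j.map f) := by
          simpa using R.adj_jR.unit.naturality f
        rw [hnat, hj, Functor.map_zero, comp_zero]
      -- Step 2 : `f` factors through `ε_Y : i i_ρ Y ⟶ Y`
      obtain ⟨u, hu⟩ : ∃ u : X ⟶ R.i.obj (R.iR.obj Y), f = u ≫ R.adj_iR.counit.app Y :=
        Triangle.coyoneda_exact₂ _ (R.tri₁ Y) f h1
      dsimp at hu
      -- Step 3 : `i_ρ u = 0` and hence `ε_X ≫ u = 0`
      haveI : IsIso (R.adj_iR.unit.app (R.iR.obj Y)) := R.isIso_iR_unit _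
      haveI : IsIso (R.iR.map (R.adj_iR.counit.app Y)) := by
        haveI : IsIso (R.adj_iR.unit.app (R.iR.obj Y) ≫
            R.iR.map (R.adj_iR.counit.app Y)) := by
          simp only [R.adj_iR.right_triangle_components]
          exact inferInstanceAs (IsIso (𝟙 _))
        exact IsIso.of_isIso_comp_left (R.adj_iR.unit.app (R.iR.obj Y)) _
      have hu0 : R.iR.map u = 0 := by
        rw [← cancel_mono (R.iR.map (R.adj_iR.counit.app Y)), zero_comp,
          ← Functor.map_comp, ← hu, hi]
      have h2 : R.adj_iR.counit.app X ≫ u = 0 := by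
        apply (R.adj_iR.homEquiv (R.iR.obj X) (R.i.obj (R.iR.obj Y))).injective
        rw [Adjunction.homEquiv_unit, Adjunction.homEquiv_unit, Functor.map_zero,
          comp_zero, Functor.map_comp, hu0, comp_zero, comp_zero]
      -- Step 4 : `u` factors through `η_X : X ⟶ j_ρ j X`
      obtain ⟨s, hs⟩ : ∃ s : R.jR.obj (R.j.obj X) ⟶ R.i.obj (R.iR.obj Y),
          u = R.adj_jR.unit.app X ≫ s :=
        Triangle.yoneda_exact₂ _ (R.tri₁ X) u h2
      dsimp at hs
      -- Step 5 : transport along the iso `j_ρ φ'_{jX}` and factor through `δ`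
      haveI : IsIso (R.adj_jL.unit.app (R.j.obj X)) := R.isIso_jL_unit _
      have h3 : R.adj_jR.unit.app (R.jL.obj (R.j.obj X)) ≫
          (inv (R.jR.map (R.adj_jL.unit.app (R.j.obj X))) ≫ s) = 0 :=
        R.hom_jL_i_zero _
      obtain ⟨t, ht⟩ : ∃ t : (R.i.obj (R.iR.obj (R.jL.obj (R.j.obj X))))⟦(1 : ℤ)⟧ ⟶
          R.i.obj (R.iR.obj Y),
          inv (R.jR.map (R.adj_jL.unit.app (R.j.obj X))) ≫ s =
            R.δ (R.jL.obj (R.j.obj X)) ≫ t :=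
        Triangle.yoneda_exact₃ _ (R.tri₁ (R.jL.obj (R.j.obj X)))
        _ h3
      dsimp at ht
      have hs2 : s = R.jR.map (R.adj_jL.unit.app (R.j.obj X)) ≫
          (R.δ (R.jL.obj (R.j.obj X)) ≫ t) := (IsIso.inv_comp_eq _).mp ht
      exact ⟨t ≫ R.adj_iR.counit.app Y, by rw [hu, hs, hs2]; simp only [assoc]⟩
    · rintro ⟨t, rfl⟩
      constructor
      · rw [Functor.map_comp, Functor.map_comp, Functor.map_comp,
          (R.isZero_j_shift_i _).eq_of_tgt
            (R.j.map (R.δ (R.jL.obj (R.j.obj X)))) 0]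
        simp
      · rw [Functor.map_comp, Functor.map_comp, Functor.map_comp,
          (R.isZero_iR_jR _).eq_of_tgt
            (R.iR.map (R.jR.map (R.adj_jL.unit.app (R.j.obj X)))) 0]
        simp
end

section
/- Let i : T → T₁ be a morphic enhancement with (i_ρ, j_λ) an adjoint pair. Then (j_ρ, Σ⁻¹ i_λ) is an adjoint pair, and its unit ζ' : Id_T → (Σ⁻¹ i_λ) j_ρ can be chosen so that (ζ')⁻¹ = θ' ∘ Σ⁻¹ ξ, where ξ : i_λ j_ρ → Σ i_ρ j_λ is the intertwining isomorphism of the recollement and θ' : i_ρ j_λ → Id is the counit of (i_ρ, j_λ). -/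
open CategoryTheory Category Limits Pretriangulated Preadditive

variable {T₀ T₁ : Type*}
  [Category T₀] [Category T₁]
  [HasZeroObject T₀] [HasZeroObject T₁]
  [Preadditive T₀] [Preadditive T₁]
  [HasShift T₀ ℤ] [HasShift T₁ ℤ]
  [∀ n : ℤ, (shiftFunctor T₀ n).Additive]
  [∀ n : ℤ, (shiftFunctor T₁ n).Additive]
  [Pretriangulated T₀] [Pretriangulated T₁]

namespace MorphicAux

variable (R : Recollement T₀ T₁ T₀)

lemma isZero_iR_jR (X : T₀) : IsZero (R.iR.obj (R.jR.obj X)) := by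
  haveI := R.isIso_jR_counit X
  have h := R.adj_jR.right_triangle_components X
  have hu : IsIso (R.adj_jR.unit.app (R.jR.obj X)) := by
    haveI : IsIso (R.adj_jR.unit.app (R.jR.obj X) ≫ R.jR.map (R.adj_jR.counit.app X)) := by
      rw [h]; exact IsIso.id _
    exact IsIso.of_isIso_comp_right _ (R.jR.map (R.adj_jR.counit.app X))
  have hz := Triangle.isZero₁_of_isIso₂ _ (R.tri₁ (R.jR.obj X)) hu
  rw [IsZero.iff_id_eq_zero]
  let e := R.adj_iR.homEquiv (R.iR.obj (R.jR.obj X)) (R.jR.obj X)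
  calc 𝟙 _ = e (e.symm (𝟙 _)) := (e.apply_symm_apply _).symm
    _ = e (e.symm 0) := by rw [hz.eq_of_src (e.symm (𝟙 _)) (e.symm 0)]
    _ = 0 := e.apply_symm_apply _

lemma hom_jR_jL_eq_zero (adjRL : R.iR ⊣ R.jL) {X W : T₀}
    (f : R.jR.obj X ⟶ R.jL.obj W) : f = 0 := by
  have hz := isZero_iR_jR R X
  let e := adjRL.homEquiv (R.jR.obj X) W
  calc f = e (e.symm f) := (e.apply_symm_apply _).symm
    _ = e (e.symm 0) := by rw [hz.eq_of_src (e.symm f) (e.symm 0)]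
    _ = 0 := e.apply_symm_apply _

lemma hom_jR_shift_jL_eq_zero (adjRL : R.iR ⊣ R.jL) {X W : T₀}
    (f : R.jR.obj X ⟶ (R.jL.obj W)⟦(1 : ℤ)⟧) : f = 0 := by
  let a := (Functor.CommShift.commShiftIso (self := R.jR_commShift) R.jR (-1 : ℤ)).hom.app X
  let c := (shiftFunctorCompIsoId T₁ (1 : ℤ) (-1 : ℤ) (by omega)).hom.app (R.jL.obj W)
  have hg : a ≫ f⟦(-1 : ℤ)⟧' ≫ c = 0 :=
    hom_jR_jL_eq_zero R adjRL _
  haveI : IsIso a := by dsimp only [a]; infer_instance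
  haveI : IsIso c := by dsimp only [c]; infer_instance
  have h1 : f⟦(-1 : ℤ)⟧' ≫ c = 0 := by
    rw [← cancel_epi a, hg, comp_zero]
  have h2 : f⟦(-1 : ℤ)⟧' = 0 := by
    rw [← cancel_mono c, h1, zero_comp]
  apply (shiftFunctor T₁ (-1 : ℤ)).map_injective
  rw [h2, Functor.map_zero]

lemma isIso_xi_app
    (ξ : R.jR ⋙ R.iL ⟶ R.jL ⋙ R.iR ⋙ shiftFunctor T₀ (1 : ℤ))
    (hξ : ∀ Y : T₀,
      R.adj_iL.unit.app (R.jR.obj Y) ≫ R.i.map (ξ.app Y) ≫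
          (Functor.CommShift.commShiftIso (self := R.i_commShift) R.i (1 : ℤ)).hom.app (R.iR.obj (R.jL.obj Y)) =
        R.jR.map (R.adj_jL.unit.app Y) ≫ R.δ (R.jL.obj Y))
    (X : T₀) : IsIso (ξ.app X) := by
  haveI := R.i_full; haveI := R.i_faithful
  haveI := R.jL_full; haveI := R.jL_faithful
  haveI := R.isIso_jL_unit X
  set TA := (Triangle.mk (R.adj_jL.counit.app (R.jR.obj X))
    (R.adj_iL.unit.app (R.jR.obj X)) (R.σ (R.jR.obj X))).rotate with hTAdef
  have hTA : TA ∈ distTriang T₁ := rot_of_distTriang _ (R.tri₂ (R.jR.obj X))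
  set TB := (Triangle.mk (R.adj_iR.counit.app (R.jL.obj X))
    (R.adj_jR.unit.app (R.jL.obj X)) (R.δ (R.jL.obj X))).rotate.rotate with hTBdef
  have hTB : TB ∈ distTriang T₁ :=
    rot_of_distTriang _ (rot_of_distTriang _ (R.tri₁ (R.jL.obj X)))
  let φ₁ : TA.obj₁ ⟶ TB.obj₁ := R.jR.map (R.adj_jL.unit.app X)
  let φ₂ : TA.obj₂ ⟶ TB.obj₂ :=
    R.i.map (ξ.app X) ≫ (Functor.CommShift.commShiftIso (self := R.i_commShift) R.i (1 : ℤ)).hom.app (R.iR.obj (R.jL.obj X))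
  have comm₁ : TA.mor₁ ≫ φ₂ = φ₁ ≫ TB.mor₁ := by
    dsimp only [TA, TB, φ₁, φ₂, Triangle.rotate, Triangle.mk]
    rw [← assoc, assoc]
    exact hξ X
  obtain ⟨φ₃, h₂, h₃⟩ :=
    complete_distinguished_triangle_morphism TA TB hTA hTB φ₁ φ₂ comm₁
  obtain ⟨d, hd⟩ : ∃ d : R.jL.obj (R.j.obj (R.jR.obj X)) ⟶ R.jL.obj X,
      (shiftFunctor T₁ (1 : ℤ)).map d = φ₃ := (shiftFunctor T₁ (1 : ℤ)).map_surjective φ₃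
  have hd' : R.adj_jL.counit.app (R.jR.obj X) ≫ R.jR.map (R.adj_jL.unit.app X) =
      d ≫ R.adj_jR.unit.app (R.jL.obj X) := by
    apply (shiftFunctor T₁ (1 : ℤ)).map_injective
    have h₃' := h₃
    dsimp only [TA, TB, φ₁, Triangle.rotate, Triangle.mk] at h₃'
    simp only [neg_comp, comp_neg, neg_inj, ← hd] at h₃'
    rw [Functor.map_comp, Functor.map_comp]
    exact h₃'.trans rfl
  have i1 : IsIso (R.j.map (R.adj_jL.counit.app (R.jR.obj X))) := by
    haveI := R.isIso_jL_unit (R.j.obj (R.jR.obj X))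
    haveI : IsIso (R.adj_jL.unit.app (R.j.obj (R.jR.obj X)) ≫
        R.j.map (R.adj_jL.counit.app (R.jR.obj X))) := by
      rw [R.adj_jL.right_triangle_components]; exact IsIso.id _
    exact IsIso.of_isIso_comp_left (R.adj_jL.unit.app (R.j.obj (R.jR.obj X))) _
  have i2 : IsIso (R.j.map (R.adj_jR.unit.app (R.jL.obj X))) := by
    haveI := R.isIso_jR_counit (R.j.obj (R.jL.obj X))
    haveI : IsIso (R.j.map (R.adj_jR.unit.app (R.jL.obj X)) ≫
        R.adj_jR.counit.app (R.j.obj (R.jL.obj X))) := by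
      erw [R.adj_jR.left_triangle_components]; exact IsIso.id _
    exact IsIso.of_isIso_comp_right _ (R.adj_jR.counit.app (R.j.obj (R.jL.obj X)))
  have hjd : IsIso (R.j.map d) := by
    have h5 : R.j.map (R.adj_jL.counit.app (R.jR.obj X)) ≫
        R.j.map (R.jR.map (R.adj_jL.unit.app X)) =
        R.j.map d ≫ R.j.map (R.adj_jR.unit.app (R.jL.obj X)) := by
      rw [← Functor.map_comp, ← Functor.map_comp, hd']
    haveI := i1; haveI := i2
    haveI : IsIso (R.j.map (R.jR.map (R.adj_jL.unit.app X))) := by infer_instance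
    have : R.j.map d = (R.j.map (R.adj_jL.counit.app (R.jR.obj X)) ≫
        R.j.map (R.jR.map (R.adj_jL.unit.app X))) ≫
        inv (R.j.map (R.adj_jR.unit.app (R.jL.obj X))) := by
      rw [h5, assoc, IsIso.hom_inv_id, comp_id]
    rw [this]; infer_instance
  obtain ⟨g, hg⟩ := R.jL.map_surjective d
  have hgiso : IsIso g := by
    have hnat' : g ≫ R.adj_jL.unit.app X =
        R.adj_jL.unit.app (R.j.obj (R.jR.obj X)) ≫ R.j.map (R.jL.map g) := by
      simpa using R.adj_jL.unit.naturality g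
    haveI := R.isIso_jL_unit (R.j.obj (R.jR.obj X))
    haveI : IsIso (R.j.map (R.jL.map g)) := by rw [hg]; exact hjd
    have : g = (R.adj_jL.unit.app (R.j.obj (R.jR.obj X)) ≫ R.j.map (R.jL.map g)) ≫
        inv (R.adj_jL.unit.app X) := by
      rw [← hnat', assoc, IsIso.hom_inv_id, comp_id]
    rw [this]; infer_instance
  haveI : IsIso d := by rw [← hg]; infer_instance
  haveI : IsIso φ₃ := by rw [← hd]; exact Functor.map_isIso _ d
  haveI hφ₁ : IsIso φ₁ := by dsimp only [φ₁]; exact Functor.map_isIso R.jR _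
  have hφ₂ : IsIso φ₂ := by
    exact isIso₂_of_isIso₁₃
      ({ hom₁ := φ₁, hom₂ := φ₂, hom₃ := φ₃, comm₁ := comm₁, comm₂ := h₂,
         comm₃ := h₃ } : TA ⟶ TB) hTA hTB hφ₁ inferInstance
  haveI : IsIso (R.i.map (ξ.app X) ≫
      (Functor.CommShift.commShiftIso (self := R.i_commShift) R.i (1 : ℤ)).hom.app (R.iR.obj (R.jL.obj X))) := hφ₂
  haveI : IsIso (R.i.map (ξ.app X)) :=
    IsIso.of_isIso_comp_right _ ((Functor.CommShift.commShiftIso (self := R.i_commShift) R.i (1 : ℤ)).hom.app (R.iR.obj (R.jL.obj X)))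
  exact isIso_of_fully_faithful R.i _

end MorphicAux

/-- For a morphic enhancement (a recollement `(T, T₁, T)` with `(i_ρ, j_λ)` adjoint with
counit `θ'`), the pair `(j_ρ, Σ⁻¹ i_λ)` is adjoint, and its unit `ζ'` can be chosen to be
the inverse of `θ' ∘ Σ⁻¹ξ`, where `ξ : i_λ j_ρ → Σ i_ρ j_λ` is the intertwining
isomorphism. -/
theorem morphic_enhancement_jR_iL_adjunction
    (R : Recollement T₀ T₁ T₀)
    (adjRL : R.iR ⊣ R.jL)
    (ξ : R.jR ⋙ R.iL ⟶ R.jL ⋙ R.iR ⋙ shiftFunctor T₀ (1 : ℤ))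
    (hξ : ∀ Y : T₀,
      R.adj_iL.unit.app (R.jR.obj Y) ≫ R.i.map (ξ.app Y) ≫
          (Functor.CommShift.commShiftIso (self := R.i_commShift) R.i (1 : ℤ)).hom.app (R.iR.obj (R.jL.obj Y)) =
        R.jR.map (R.adj_jL.unit.app Y) ≫ R.δ (R.jL.obj Y)) :
    ∃ adj' : R.jR ⊣ R.iL ⋙ shiftFunctor T₀ (-1 : ℤ),
      ∀ X : T₀,
        adj'.unit.app X ≫ (ξ.app X)⟦(-1 : ℤ)⟧' ≫
            (shiftFunctorCompIsoId T₀ (1 : ℤ) (-1 : ℤ) (by omega)).hom.app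
              (R.iR.obj (R.jL.obj X)) ≫ adjRL.counit.app X = 𝟙 X ∧
        ((ξ.app X)⟦(-1 : ℤ)⟧' ≫
            (shiftFunctorCompIsoId T₀ (1 : ℤ) (-1 : ℤ) (by omega)).hom.app
              (R.iR.obj (R.jL.obj X)) ≫ adjRL.counit.app X) ≫ adj'.unit.app X =
          𝟙 ((R.iL ⋙ shiftFunctor T₀ (-1 : ℤ)).obj (R.jR.obj X)) := by
  classical
  haveI := R.jL_full; haveI := R.jL_faithful
  haveI hξiso : ∀ X : T₀, IsIso (ξ.app X) := MorphicAux.isIso_xi_app R ξ hξ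
  let θ : ∀ X : T₀, ((R.iL ⋙ shiftFunctor T₀ (-1 : ℤ)).obj (R.jR.obj X)) ⟶ X := fun X =>
    (ξ.app X)⟦(-1 : ℤ)⟧' ≫ (shiftFunctorCompIsoId T₀ (1 : ℤ) (-1 : ℤ) (by omega)).hom.app
      (R.iR.obj (R.jL.obj X)) ≫ adjRL.counit.app X
  haveI hθiso : ∀ X : T₀, IsIso (θ X) := fun X => by
    haveI := hξiso X
    dsimp only [θ]
    infer_instance
  have θnat : ∀ {X X' : T₀} (f : X ⟶ X'),
      (R.iL.map (R.jR.map f))⟦(-1 : ℤ)⟧' ≫ θ X' = θ X ≫ f := by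
    intro X X' f
    dsimp only [θ]
    rw [← assoc, ← Functor.map_comp]
    have h1 : R.iL.map (R.jR.map f) ≫ ξ.app X' =
        ξ.app X ≫ (R.iR.map (R.jL.map f))⟦(1 : ℤ)⟧' := by
      simpa using ξ.naturality f
    rw [h1, Functor.map_comp, assoc]
    have h2 : ((R.iR.map (R.jL.map f))⟦(1 : ℤ)⟧')⟦(-1 : ℤ)⟧' ≫
        (shiftFunctorCompIsoId T₀ (1 : ℤ) (-1 : ℤ) (by omega)).hom.app
          (R.iR.obj (R.jL.obj X')) =
        (shiftFunctorCompIsoId T₀ (1 : ℤ) (-1 : ℤ) (by omega)).hom.app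
          (R.iR.obj (R.jL.obj X)) ≫ R.iR.map (R.jL.map f) :=
      (shiftFunctorCompIsoId T₀ (1 : ℤ) (-1 : ℤ) (by omega)).hom.naturality
        (R.iR.map (R.jL.map f))
    have h3 : R.iR.map (R.jL.map f) ≫ adjRL.counit.app X' = adjRL.counit.app X ≫ f := by
      simpa using adjRL.counit.naturality f
    rw [assoc, reassoc_of% h2, h3]
    simp only [assoc]
  -- injectivity of `iL` on morphisms out of the image of `jR`
  have inj : ∀ {X : T₀} {Y : T₁} (f g : R.jR.obj X ⟶ Y),
      R.iL.map f = R.iL.map g → f = g := by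
    intro X Y f g h
    have hnatf : R.adj_iL.unit.app (R.jR.obj X) ≫ R.i.map (R.iL.map f) =
        f ≫ R.adj_iL.unit.app Y := by
      simpa using (R.adj_iL.unit.naturality f).symm
    have hnatg : R.adj_iL.unit.app (R.jR.obj X) ≫ R.i.map (R.iL.map g) =
        g ≫ R.adj_iL.unit.app Y := by
      simpa using (R.adj_iL.unit.naturality g).symm
    have h0 : (f - g) ≫ R.adj_iL.unit.app Y = 0 := by
      rw [sub_comp, ← hnatf, ← hnatg, h, sub_self]
    obtain ⟨q, hq⟩ : ∃ q : R.jR.obj X ⟶ R.jL.obj (R.j.obj Y), f - g = q ≫ R.adj_jL.counit.app Y :=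
      Triangle.coyoneda_exact₂ _ (R.tri₂ Y) (f - g) h0
    have : f - g = 0 := by
      rw [hq, MorphicAux.hom_jR_jL_eq_zero R adjRL q, zero_comp]
    rw [← sub_eq_zero]
    exact this
  -- surjectivity of `iL` on morphisms out of the image of `jR`
  have surj : ∀ {X : T₀} {Y : T₁} (s : R.iL.obj (R.jR.obj X) ⟶ R.iL.obj Y),
      ∃ f : R.jR.obj X ⟶ Y, R.iL.map f = s := by
    intro X Y s
    have hm : (R.adj_iL.unit.app (R.jR.obj X) ≫ R.i.map s) ≫ R.σ Y = 0 :=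
      MorphicAux.hom_jR_shift_jL_eq_zero R adjRL _
    obtain ⟨f, hf⟩ : ∃ f : R.jR.obj X ⟶ Y,
        R.adj_iL.unit.app (R.jR.obj X) ≫ R.i.map s = f ≫ R.adj_iL.unit.app Y :=
      Triangle.coyoneda_exact₃ _ (R.tri₂ Y)
      (R.adj_iL.unit.app (R.jR.obj X) ≫ R.i.map s) hm
    refine ⟨f, ?_⟩
    apply (R.adj_iL.homEquiv (R.jR.obj X) (R.iL.obj Y)).injective
    rw [Adjunction.homEquiv_unit, Adjunction.homEquiv_unit]
    have hnat : R.adj_iL.unit.app (R.jR.obj X) ≫ R.i.map (R.iL.map f) =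
        f ≫ R.adj_iL.unit.app Y := by
      simpa using (R.adj_iL.unit.naturality f).symm
    rw [hnat]
    exact hf.symm
  have fful : (shiftFunctor T₀ (-1 : ℤ)).FullyFaithful :=
    Functor.FullyFaithful.ofFullyFaithful _
  let homE : ∀ (X : T₀) (Y : T₁),
      (R.jR.obj X ⟶ Y) ≃ (X ⟶ (R.iL ⋙ shiftFunctor T₀ (-1 : ℤ)).obj Y) := fun X Y =>
    (Equiv.ofBijective (fun f => R.iL.map f)
        ⟨fun f g h => inj f g h, fun s => surj s⟩).trans
      (fful.homEquiv.trans ((asIso (θ X)).homCongr (Iso.refl _)))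
  have homE_apply : ∀ (X : T₀) (Y : T₁) (f : R.jR.obj X ⟶ Y),
      homE X Y f = inv (θ X) ≫ (R.iL.map f)⟦(-1 : ℤ)⟧' := by
    intro X Y f
    dsimp only [homE, Equiv.trans_apply, Equiv.ofBijective_apply,
      Functor.FullyFaithful.homEquiv, Equiv.coe_fn_mk, Iso.homCongr_apply]
    simp
    rfl
  have homE_nat_left : ∀ {X' X : T₀} (Y : T₁) (f : X' ⟶ X) (h : R.jR.obj X ⟶ Y),
      homE X' Y (R.jR.map f ≫ h) = f ≫ homE X Y h := by
    intro X' X Y f h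
    have key : inv (θ X') ≫ (R.iL.map (R.jR.map f))⟦(-1 : ℤ)⟧' = f ≫ inv (θ X) := by
      rw [← cancel_mono (θ X)]
      simp only [assoc]
      rw [θnat f, ← assoc, IsIso.inv_hom_id, id_comp, IsIso.inv_hom_id, comp_id]
    rw [homE_apply, homE_apply, Functor.map_comp, Functor.map_comp, ← assoc, key,
      assoc]
  let core : Adjunction.CoreHomEquiv R.jR (R.iL ⋙ shiftFunctor T₀ (-1 : ℤ)) :=
    { homEquiv := homE
      homEquiv_naturality_left_symm := by
        intro X' X Y f g
        apply (homE X' Y).injective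
        rw [Equiv.apply_symm_apply, homE_nat_left, Equiv.apply_symm_apply]
      homEquiv_naturality_right := by
        intro X Y Y' f g
        rw [homE_apply, homE_apply, Functor.map_comp]
        dsimp
        simp only [Functor.map_comp, assoc] }
  have hunit : ∀ X : T₀, (Adjunction.mkOfHomEquiv core).unit.app X = inv (θ X) := by
    intro X
    have h1 : (Adjunction.mkOfHomEquiv core).unit.app X = homE X _ (𝟙 _) := rfl
    rw [h1, homE_apply]
    simp
  refine ⟨Adjunction.mkOfHomEquiv core, fun X => ?_⟩
  rw [hunit X]
  constructor
  · exact IsIso.inv_hom_id (θ X)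
  · exact IsIso.hom_inv_id (θ X)
end
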